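/- arXiv:1001.4684 — 5 statements merged into one kernel-verified Lean document; each statement's English description precedes it below -/
import Mathlib

section
/- If Γ is a Gamma random variable with shape parameter α+β and rate λ, and B is a Beta(α,β) random variable independent of Γ, then the product Γ·B has the same distribution as a Gamma random variable with shape parameter α and rate λ. -/
open MeasureTheory ProbabilityTheory Real Filter Topology Set
open scoped ENNReal

/-- Density (w.r.t. Lebesgue measure) of the Beta(a,b) distribution. -/
noncomputable def betaPDF' (a b : ℝ) (x : ℝ) : ℝ≥0∞ :=
  if x ∈ Set.Ioo (0 : ℝ) 1 then
    ENNReal.ofReal (Real.Gamma (a + b) / (Real.Gamma a * Real.Gamma b)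
      * x ^ (a - 1) * (1 - x) ^ (b - 1))
  else 0

/-- Density (w.r.t. Lebesgue measure) of the Gamma distribution with shape `a` and rate `r`. -/
noncomputable def gammaPDF' (a r : ℝ) (x : ℝ) : ℝ≥0∞ :=
  if 0 < x then
    ENNReal.ofReal (r ^ a * x ^ (a - 1) * Real.exp (-(r * x)) / Real.Gamma a)
  else 0

lemma measurable_gammaPDF'' (a r : ℝ) : Measurable (gammaPDF' a r) := by
  unfold gammaPDF'
  refine Measurable.ite measurableSet_Ioi ?_ measurable_const
  fun_prop

lemma measurable_betaPDF'' (a b : ℝ) : Measurable (betaPDF' a b) := by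
  unfold betaPDF'
  refine Measurable.ite (measurableSet_Ioo) ?_ measurable_const
  fun_prop

lemma gammaPDF'_of_nonpos {a r x : ℝ} (hx : ¬ 0 < x) : gammaPDF' a r x = 0 := by
  simp [gammaPDF', hx]

lemma betaPDF'_of_not_mem {a b x : ℝ} (hx : x ∉ Set.Ioo (0:ℝ) 1) : betaPDF' a b x = 0 := by
  simp [betaPDF', hx]

lemma lintegral_rpow_exp_aux {b r : ℝ} (hb : 0 < b) (hr : 0 < r) :
    ∫⁻ u in Set.Ioi (0:ℝ), ENNReal.ofReal (u ^ (b - 1) * Real.exp (-(r * u)))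
      = ENNReal.ofReal ((1 / r) ^ b * Real.Gamma b) := by
  rw [← Real.integral_rpow_mul_exp_neg_mul_Ioi hb hr]
  rw [← ofReal_integral_eq_lintegral_ofReal]
  · have : IntegrableOn (fun x : ℝ => x ^ (b - 1) * Real.exp (-r * x ^ (1:ℝ))) (Set.Ioi 0) :=
      integrableOn_rpow_mul_exp_neg_mul_rpow (by linarith) one_pos hr
    refine this.congr_fun (fun x hx => ?_) measurableSet_Ioi
    simp only [Real.rpow_one, neg_mul]
  · filter_upwards [ae_restrict_mem measurableSet_Ioi] with x hx
    have : (0:ℝ) < x := hx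
    positivity

lemma inner_integral_eq {α β lam : ℝ} (hα : 0 < α) (hβ : 0 < β) (hlam : 0 < lam) (z : ℝ) :
    ∫⁻ x, gammaPDF' (α + β) lam x * betaPDF' α β (z / x) * (ENNReal.ofReal x)⁻¹ ∂volume
      = gammaPDF' α lam z := by
  have hΓα := Real.Gamma_pos_of_pos hα
  have hΓβ := Real.Gamma_pos_of_pos hβ
  have hΓαβ := Real.Gamma_pos_of_pos (by linarith : (0:ℝ) < α + β)
  by_cases hz : 0 < z
  · -- main case
    set K : ℝ := lam ^ α * z ^ (α - 1) * Real.exp (-(lam * z)) / Real.Gamma α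
        * (lam ^ β / Real.Gamma β) with hK
    have hKnn : 0 ≤ K := by
      have h1 : (0:ℝ) ≤ z ^ (α - 1) := Real.rpow_nonneg hz.le _
      have h2 : (0:ℝ) ≤ lam ^ α := Real.rpow_nonneg hlam.le _
      have h3 : (0:ℝ) ≤ lam ^ β := Real.rpow_nonneg hlam.le _
      positivity
    have hpt : ∀ x ∈ Set.Ioi z,
        gammaPDF' (α + β) lam x * betaPDF' α β (z / x) * (ENNReal.ofReal x)⁻¹
          = ENNReal.ofReal K
            * ENNReal.ofReal ((x - z) ^ (β - 1) * Real.exp (-(lam * (x - z)))) := by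
      intro x hx
      have hzx : z < x := hx
      have hx0 : (0:ℝ) < x := lt_trans hz hzx
      have hmem : z / x ∈ Set.Ioo (0:ℝ) 1 :=
        ⟨div_pos hz hx0, (div_lt_one hx0).mpr hzx⟩
      rw [gammaPDF', if_pos hx0, betaPDF', if_pos hmem,
        ← ENNReal.ofReal_inv_of_pos hx0]
      have hA : (0:ℝ) ≤ lam ^ (α + β) * x ^ (α + β - 1) * Real.exp (-(lam * x))
          / Real.Gamma (α + β) := by
        have := Real.rpow_nonneg hlam.le (α + β)
        have := Real.rpow_nonneg hx0.le (α + β - 1)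
        positivity
      have hB : (0:ℝ) ≤ Real.Gamma (α + β) / (Real.Gamma α * Real.Gamma β)
          * (z / x) ^ (α - 1) * (1 - z / x) ^ (β - 1) := by
        have := Real.rpow_nonneg (le_of_lt hmem.1) (α - 1)
        have h2 : (0:ℝ) ≤ (1 - z / x) := by linarith [hmem.2]
        have := Real.rpow_nonneg h2 (β - 1)
        positivity
      rw [← ENNReal.ofReal_mul hA, ← ENNReal.ofReal_mul (mul_nonneg hA hB),
        ← ENNReal.ofReal_mul hKnn]
      congr 1
      have e1 : (z / x) ^ (α - 1) = z ^ (α - 1) / x ^ (α - 1) :=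
        Real.div_rpow hz.le hx0.le _
      have e2 : (1 : ℝ) - z / x = (x - z) / x := by field_simp
      have e3 : ((x - z) / x) ^ (β - 1) = (x - z) ^ (β - 1) / x ^ (β - 1) :=
        Real.div_rpow (by linarith) hx0.le _
      have e4 : x ^ (α + β - 1) = x ^ (α - 1) * x ^ (β - 1) * x := by
        rw [show α + β - 1 = (α - 1) + (β - 1) + 1 by ring, Real.rpow_add hx0,
          Real.rpow_add hx0, Real.rpow_one]
      have e5 : lam ^ (α + β) = lam ^ α * lam ^ β := Real.rpow_add hlam _ _
      have e6 : Real.exp (-(lam * x))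
          = Real.exp (-(lam * z)) * Real.exp (-(lam * (x - z))) := by
        rw [← Real.exp_add]; ring_nf
      rw [e1, e2, e3, e4, e5, e6, hK]
      have hxa : x ^ (α - 1) ≠ 0 := (Real.rpow_pos_of_pos hx0 _).ne'
      have hxb : x ^ (β - 1) ≠ 0 := (Real.rpow_pos_of_pos hx0 _).ne'
      field_simp
    have hsupp : ∀ x, x ∉ Set.Ioi z →
        gammaPDF' (α + β) lam x * betaPDF' α β (z / x) * (ENNReal.ofReal x)⁻¹ = 0 := by
      intro x hx
      by_cases hx0 : 0 < x
      · have hxz : x ≤ z := not_lt.mp hx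
        have h1 : (1:ℝ) ≤ z / x := (one_le_div hx0).mpr hxz
        rw [betaPDF'_of_not_mem (fun hmem => absurd hmem.2 (not_lt.mpr h1)),
          mul_zero, zero_mul]
      · rw [gammaPDF'_of_nonpos hx0, zero_mul, zero_mul]
    calc ∫⁻ x, gammaPDF' (α + β) lam x * betaPDF' α β (z / x) * (ENNReal.ofReal x)⁻¹ ∂volume
        = ∫⁻ x in Set.Ioi z,
            gammaPDF' (α + β) lam x * betaPDF' α β (z / x) * (ENNReal.ofReal x)⁻¹ ∂volume := by
          rw [← lintegral_indicator measurableSet_Ioi]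
          refine lintegral_congr fun x => ?_
          by_cases hx : x ∈ Set.Ioi z
          · rw [Set.indicator_of_mem hx]
          · rw [Set.indicator_of_notMem hx, hsupp x hx]
      _ = ∫⁻ x in Set.Ioi z, ENNReal.ofReal K
            * ENNReal.ofReal ((x - z) ^ (β - 1) * Real.exp (-(lam * (x - z)))) ∂volume :=
          setLIntegral_congr_fun measurableSet_Ioi hpt
      _ = ENNReal.ofReal K * ∫⁻ x in Set.Ioi z,
            ENNReal.ofReal ((x - z) ^ (β - 1) * Real.exp (-(lam * (x - z)))) ∂volume :=
          lintegral_const_mul' _ _ ENNReal.ofReal_ne_top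
      _ = ENNReal.ofReal K * ∫⁻ u in Set.Ioi (0:ℝ),
            ENNReal.ofReal (u ^ (β - 1) * Real.exp (-(lam * u))) ∂volume := by
          congr 1
          have hpre : (fun u : ℝ => u + z) ⁻¹' Set.Ioi z = Set.Ioi 0 := by
            ext u; simp [Set.mem_Ioi]
          rw [← (measurePreserving_add_right volume z).setLIntegral_comp_preimage_emb
            (measurableEmbedding_addRight z)
            (fun x => ENNReal.ofReal ((x - z) ^ (β - 1) * Real.exp (-(lam * (x - z)))))
            (Set.Ioi z), hpre]
          refine setLIntegral_congr_fun measurableSet_Ioi (fun u hu => ?_)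
          simp [add_sub_cancel_right]
      _ = ENNReal.ofReal K * ENNReal.ofReal ((1 / lam) ^ β * Real.Gamma β) := by
          rw [lintegral_rpow_exp_aux hβ hlam]
      _ = gammaPDF' α lam z := by
          rw [← ENNReal.ofReal_mul hKnn, gammaPDF', if_pos hz]
          congr 1
          have h1 : (1 / lam) ^ β = (lam ^ β)⁻¹ := by
            rw [one_div]; exact Real.inv_rpow hlam.le β
          have hlb : lam ^ β ≠ 0 := (Real.rpow_pos_of_pos hlam _).ne'
          rw [hK, h1]
          field_simp
  · rw [gammaPDF'_of_nonpos hz, ← lintegral_zero]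
    refine lintegral_congr fun x => ?_
    by_cases hx : 0 < x
    · have hle : z / x ≤ 0 := div_nonpos_iff.mpr (Or.inr ⟨le_of_not_gt hz, hx.le⟩)
      rw [betaPDF'_of_not_mem (fun hmem => absurd hmem.1 (not_lt.mpr hle)),
        mul_zero, zero_mul]
    · rw [gammaPDF'_of_nonpos hx, zero_mul, zero_mul]

theorem gamma_beta_product
    {Ω : Type*} [MeasurableSpace Ω] (P : Measure Ω) [IsProbabilityMeasure P]
    (α β lam : ℝ) (hα : 0 < α) (hβ : 0 < β) (hlam : 0 < lam)
    (G B : Ω → ℝ) (hG : Measurable G) (hB : Measurable B)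
    (hind : IndepFun G B P)
    (hGlaw : Measure.map G P = volume.withDensity (gammaPDF' (α + β) lam))
    (hBlaw : Measure.map B P = volume.withDensity (betaPDF' α β)) :
    Measure.map (fun ω => G ω * B ω) P = volume.withDensity (gammaPDF' α lam) := by
  have hmf : Measurable (gammaPDF' (α + β) lam) := measurable_gammaPDF'' _ _
  have hmg : Measurable (betaPDF' α β) := measurable_betaPDF'' _ _
  have hprodmap : Measure.map (fun ω => (G ω, B ω)) P
      = (Measure.map G P).prod (Measure.map B P) :=
    (indepFun_iff_map_prod_eq_prod_map_map hG.aemeasurable hB.aemeasurable).mp hind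
  have hPm : IsProbabilityMeasure (volume.withDensity (gammaPDF' (α + β) lam)) := by
    rw [← hGlaw]; exact Measure.isProbabilityMeasure_map hG.aemeasurable
  have hPg : IsProbabilityMeasure (volume.withDensity (betaPDF' α β)) := by
    rw [← hBlaw]; exact Measure.isProbabilityMeasure_map hB.aemeasurable
  have hprod : (volume.withDensity (gammaPDF' (α + β) lam)).prod
        (volume.withDensity (betaPDF' α β))
      = (volume.prod volume).withDensity
          fun p => gammaPDF' (α + β) lam p.1 * betaPDF' α β p.2 := by
    refine Measure.prod_eq fun s t hs ht => ?_
    rw [withDensity_apply _ (hs.prod ht), ← Measure.prod_restrict,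
      lintegral_prod_mul hmf.aemeasurable hmg.aemeasurable,
      withDensity_apply _ hs, withDensity_apply _ ht]
  have hstep : Measure.map (fun ω => G ω * B ω) P
      = Measure.map (fun p : ℝ × ℝ => p.1 * p.2)
          ((volume.prod volume).withDensity
            fun p => gammaPDF' (α + β) lam p.1 * betaPDF' α β p.2) := by
    rw [← hprod, ← hGlaw, ← hBlaw, ← hprodmap,
      Measure.map_map (g := fun p : ℝ × ℝ => p.1 * p.2) (measurable_fst.mul measurable_snd) (hG.prodMk hB)]
    rfl
  rw [hstep]
  refine Measure.ext fun s hs => ?_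
  have hmuls : MeasurableSet ((fun p : ℝ × ℝ => p.1 * p.2) ⁻¹' s) :=
    hs.preimage (measurable_fst.mul measurable_snd)
  rw [Measure.map_apply (f := fun p : ℝ × ℝ => p.1 * p.2) (measurable_fst.mul measurable_snd) hs,
    withDensity_apply _ hmuls, withDensity_apply _ hs,
    ← lintegral_indicator hmuls]
  have hswapm : Measurable (fun p : ℝ × ℝ =>
      Set.indicator s 1 p.2 * (gammaPDF' (α + β) lam p.1 * betaPDF' α β (p.2 / p.1)
        * (ENNReal.ofReal p.1)⁻¹)) :=
    ((measurable_one.indicator hs).comp measurable_snd).mul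
      (((hmf.comp measurable_fst).mul
        (hmg.comp (measurable_snd.div measurable_fst))).mul
        ((ENNReal.measurable_ofReal.comp measurable_fst).inv))
  have hx_fubini : ∀ x : ℝ,
      (∫⁻ y, Set.indicator s 1 (x * y)
        * (gammaPDF' (α + β) lam x * betaPDF' α β y) ∂volume)
      = ∫⁻ z, Set.indicator s 1 z
          * (gammaPDF' (α + β) lam x * betaPDF' α β (z / x)
            * (ENNReal.ofReal x)⁻¹) ∂volume := by
    intro x
    by_cases hx : 0 < x
    · set φ : ℝ → ℝ≥0∞ := fun w => Set.indicator s 1 w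
        * (gammaPDF' (α + β) lam x * betaPDF' α β (w / x)) with hφ
      have hφm : Measurable φ :=
        (measurable_one.indicator hs).mul
          (measurable_const.mul (hmg.comp (measurable_id.div_const x)))
      have h1 : ∀ y : ℝ, Set.indicator s 1 (x * y)
          * (gammaPDF' (α + β) lam x * betaPDF' α β y) = φ (x * y) := by
        intro y
        have hxy : x * y / x = y := by field_simp
        simp only [hφ, hxy]
      have hofr : ENNReal.ofReal |x⁻¹| = (ENNReal.ofReal x)⁻¹ := by
        rw [abs_of_pos (inv_pos.mpr hx), ENNReal.ofReal_inv_of_pos hx]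
      have hinvne : (ENNReal.ofReal x)⁻¹ ≠ ∞ := by
        rw [ENNReal.inv_ne_top]
        exact (ENNReal.ofReal_pos.mpr hx).ne'
      calc (∫⁻ y, Set.indicator s 1 (x * y)
            * (gammaPDF' (α + β) lam x * betaPDF' α β y) ∂volume)
          = ∫⁻ y, φ (x * y) ∂volume := lintegral_congr fun y => h1 y
        _ = ∫⁻ w, φ w ∂(Measure.map (fun y => x * y) volume) :=
            (lintegral_map hφm (measurable_const_mul x)).symm
        _ = ∫⁻ w, φ w ∂(ENNReal.ofReal |x⁻¹| • volume) := by
            rw [Real.map_volume_mul_left hx.ne']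
        _ = (ENNReal.ofReal x)⁻¹ * ∫⁻ w, φ w ∂volume := by
            rw [lintegral_smul_measure, hofr, smul_eq_mul]
        _ = ∫⁻ w, (ENNReal.ofReal x)⁻¹ * φ w ∂volume :=
            (lintegral_const_mul' _ _ hinvne).symm
        _ = ∫⁻ z, Set.indicator s 1 z
              * (gammaPDF' (α + β) lam x * betaPDF' α β (z / x)
                * (ENNReal.ofReal x)⁻¹) ∂volume := by
            refine lintegral_congr fun w => ?_
            rw [hφ]; ring
    · have hf0 : gammaPDF' (α + β) lam x = 0 := gammaPDF'_of_nonpos hx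
      simp [hf0]
  calc (∫⁻ p, Set.indicator ((fun p : ℝ × ℝ => p.1 * p.2) ⁻¹' s)
          (fun p => gammaPDF' (α + β) lam p.1 * betaPDF' α β p.2) p
          ∂(volume.prod volume))
      = ∫⁻ p : ℝ × ℝ, Set.indicator s 1 (p.1 * p.2)
          * (gammaPDF' (α + β) lam p.1 * betaPDF' α β p.2) ∂(volume.prod volume) := by
        refine lintegral_congr fun p => ?_
        by_cases hp : p.1 * p.2 ∈ s
        · simp [Set.indicator, hp]
        · simp [Set.indicator, hp]
    _ = ∫⁻ x, ∫⁻ y, Set.indicator s 1 (x * y)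
          * (gammaPDF' (α + β) lam x * betaPDF' α β y) ∂volume ∂volume :=
        lintegral_prod _ (((measurable_one.indicator hs).comp
          (measurable_fst.mul measurable_snd)).mul
          ((hmf.comp measurable_fst).mul (hmg.comp measurable_snd))).aemeasurable
    _ = ∫⁻ x, ∫⁻ z, Set.indicator s 1 z
          * (gammaPDF' (α + β) lam x * betaPDF' α β (z / x)
            * (ENNReal.ofReal x)⁻¹) ∂volume ∂volume :=
        lintegral_congr fun x => hx_fubini x
    _ = ∫⁻ z, ∫⁻ x, Set.indicator s 1 z
          * (gammaPDF' (α + β) lam x * betaPDF' α β (z / x)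
            * (ENNReal.ofReal x)⁻¹) ∂volume ∂volume :=
        lintegral_lintegral_swap hswapm.aemeasurable
    _ = ∫⁻ z, Set.indicator s 1 z * gammaPDF' α lam z ∂volume := by
        refine lintegral_congr fun z => ?_
        rw [lintegral_const_mul' _ _ (by
          by_cases hzs : z ∈ s
          · rw [Set.indicator_of_mem hzs]; simp
          · rw [Set.indicator_of_notMem hzs]; simp),
          inner_integral_eq hα hβ hlam z]
    _ = ∫⁻ z in s, gammaPDF' α lam z ∂volume := by
        rw [← lintegral_indicator hs]
        refine lintegral_congr fun z => ?_
        by_cases hzs : z ∈ s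
        · simp [Set.indicator, hzs]
        · simp [Set.indicator, hzs]
end

section
/- Let R be a positive random variable with distribution function H satisfying H(0)=0, and let S be an independent Beta(α,β) random variable. Then the distribution function H_{α,β} of W = R·S satisfies H_{α,β}(x) = (Γ(α+β)/Γ(α)) x^α · (I_β (p_{-α-β} H))(x) for all x in (0, ω), where ω is the upper endpoint of H. -/
open MeasureTheory ProbabilityTheory Real Filter Topology Set
open scoped ENNReal

/-- Density (w.r.t. Lebesgue measure) of the Beta(a,b) distribution. -/
noncomputable def betaPDF (a b : ℝ) (x : ℝ) : ℝ≥0∞ :=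
  if x ∈ Set.Ioo (0 : ℝ) 1 then
    ENNReal.ofReal (Real.Gamma (a + b) / (Real.Gamma a * Real.Gamma b)
      * x ^ (a - 1) * (1 - x) ^ (b - 1))
  else 0

lemma weyl_aux_pt (α β x s h : ℝ) (hx : 0 < x) (hs0 : 0 < s) (hs1 : s < 1) :
    |(-(x / s ^ 2))| * ((x / s - x) ^ (β - 1) * ((x / s) ^ (-α - β) * h)) =
      x ^ (-α) * (s ^ (α - 1) * ((1 - s) ^ (β - 1) * h)) := by
  have h1s : (0:ℝ) < 1 - s := by linarith
  have hsx : x / s - x = x * (1 - s) / s := by field_simp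
  have habs : |(-(x / s ^ 2))| = x / s ^ 2 := by
    rw [abs_neg, abs_of_pos (by positivity)]
  rw [habs, hsx]
  have key : x / s ^ 2 * ((x * (1 - s) / s) ^ (β - 1) * (x / s) ^ (-α - β)) =
      x ^ (-α) * (s ^ (α - 1) * (1 - s) ^ (β - 1)) := by
    have hA : (0:ℝ) < x / s ^ 2 * ((x * (1 - s) / s) ^ (β - 1) * (x / s) ^ (-α - β)) := by
      positivity
    have hB : (0:ℝ) < x ^ (-α) * (s ^ (α - 1) * (1 - s) ^ (β - 1)) := by positivity
    rw [← Real.exp_log hA, ← Real.exp_log hB]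
    congr 1
    rw [Real.log_mul (by positivity) (by positivity),
      Real.log_mul (by positivity) (by positivity),
      Real.log_mul (by positivity) (by positivity),
      Real.log_div (by positivity) (by positivity),
      Real.log_rpow (by positivity : (0:ℝ) < x * (1 - s) / s),
      Real.log_rpow (by positivity : (0:ℝ) < x / s),
      Real.log_mul (by positivity) (by positivity),
      Real.log_rpow hs0, Real.log_rpow h1s, Real.log_pow,
      Real.log_div (by positivity) hs0.ne', Real.log_mul hx.ne' h1s.ne',
      Real.log_div hx.ne' hs0.ne', Real.log_rpow hx]
    push_cast
    ring
  calc x / s ^ 2 * ((x * (1 - s) / s) ^ (β - 1) * ((x / s) ^ (-α - β) * h))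
      = x / s ^ 2 * ((x * (1 - s) / s) ^ (β - 1) * (x / s) ^ (-α - β)) * h := by ring
    _ = x ^ (-α) * (s ^ (α - 1) * (1 - s) ^ (β - 1)) * h := by rw [key]
    _ = _ := by ring

theorem beta_product_convolution_weyl
    {Ω : Type*} [MeasurableSpace Ω] (P : Measure Ω) [IsProbabilityMeasure P]
    (α β : ℝ) (hα : 0 < α) (hβ : 0 < β)
    (R S : Ω → ℝ) (hR : Measurable R) (hS : Measurable S)
    (hRpos : ∀ᵐ ω ∂P, 0 < R ω)
    (hind : IndepFun R S P)
    (hSlaw : Measure.map S P = volume.withDensity (_root_.betaPDF α β))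
    -- `H` is the distribution function of `R`, `Hab` that of `W = R·S`
    (H Hab : ℝ → ℝ)
    (hH : ∀ x, H x = (P {ω | R ω ≤ x}).toReal)
    (hHab : ∀ x, Hab x = (P {ω | R ω * S ω ≤ x}).toReal)
    -- `ϖ` is the upper endpoint of `H`
    (ϖ : ℝ≥0∞) (hϖ : ∀ x : ℝ, ENNReal.ofReal x < ϖ ↔ H x < 1) :
    ∀ x : ℝ, 0 < x → ENNReal.ofReal x < ϖ →
      Hab x = Real.Gamma (α + β) / Real.Gamma α * x ^ α *
        ((1 / Real.Gamma β) * ∫ y in Set.Ioi x, (y - x) ^ (β - 1) * (y ^ (-α - β) * H y)) := by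
  intro x hx _
  set c : ℝ := Real.Gamma (α + β) / (Real.Gamma α * Real.Gamma β) with hcdef
  have hΓα := Real.Gamma_pos_of_pos hα
  have hΓβ := Real.Gamma_pos_of_pos hβ
  have hΓαβ := Real.Gamma_pos_of_pos (add_pos hα hβ)
  have hc0 : 0 < c := div_pos hΓαβ (mul_pos hΓα hΓβ)
  -- basic properties of H
  have hHmono : Monotone H := by
    intro a b hab
    rw [hH a, hH b]
    exact ENNReal.toReal_mono (measure_ne_top _ _)
      (measure_mono (fun ω hω => le_trans hω hab))
  have hHmeas : Measurable H := hHmono.measurable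
  have hHnn : ∀ y, 0 ≤ H y := fun y => by rw [hH y]; exact ENNReal.toReal_nonneg
  set ν : Measure ℝ := Measure.map R P with hν
  -- Step 1 : product measure
  have hmap : Measure.map (fun ω => (S ω, R ω)) P = (Measure.map S P).prod ν :=
    (indepFun_iff_map_prod_eq_prod_map_map hS.aemeasurable hR.aemeasurable).1 hind.symm
  have hAmeas : MeasurableSet {p : ℝ × ℝ | p.2 * p.1 ≤ x} :=
    measurableSet_le (measurable_snd.mul measurable_fst) measurable_const
  have h1 : P {ω | R ω * S ω ≤ x}
      = ∫⁻ s, ν {r | r * s ≤ x} ∂(Measure.map S P) := by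
    have e1 : P {ω | R ω * S ω ≤ x}
        = Measure.map (fun ω => (S ω, R ω)) P {p : ℝ × ℝ | p.2 * p.1 ≤ x} := by
      rw [Measure.map_apply (hS.prodMk hR) hAmeas]
      rfl
    rw [e1, hmap, Measure.prod_apply hAmeas]
    rfl
  -- betaPDF measurability / finiteness
  have hbmeas : Measurable (_root_.betaPDF α β) := by
    unfold _root_.betaPDF
    refine Measurable.ite measurableSet_Ioo ?_ measurable_const
    exact ((measurable_const.mul (measurable_id'.pow_const _)).mul
      ((measurable_const.sub measurable_id').pow_const _)).ennreal_ofReal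
  have hbfin : ∀ s, _root_.betaPDF α β s < ∞ := by
    intro s
    unfold _root_.betaPDF
    split <;> simp [ENNReal.ofReal_lt_top]
  have h2 : P {ω | R ω * S ω ≤ x}
      = ∫⁻ s, _root_.betaPDF α β s * ν {r | r * s ≤ x} := by
    rw [h1, hSlaw,
      lintegral_withDensity_eq_lintegral_mul_non_measurable _ hbmeas
        (ae_of_all _ hbfin)]
    rfl
  -- rewrite as a set lintegral over Ioo 0 1
  have h3 : (∫⁻ s, _root_.betaPDF α β s * ν {r | r * s ≤ x})
      = ∫⁻ s in Ioo (0:ℝ) 1,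
          ENNReal.ofReal (c * s ^ (α - 1) * (1 - s) ^ (β - 1) * H (x / s)) := by
    rw [← lintegral_indicator measurableSet_Ioo]
    refine lintegral_congr fun s => ?_
    rw [Set.indicator_apply]
    by_cases hs : s ∈ Ioo (0:ℝ) 1
    · rw [if_pos hs]
      have hset : {r : ℝ | r * s ≤ x} = Iic (x / s) := by
        ext r
        simp [le_div_iff₀ hs.1]
      have hνset : ν {r | r * s ≤ x} = ENNReal.ofReal (H (x / s)) := by
        rw [hset, hν, Measure.map_apply hR measurableSet_Iic, hH]
        exact (ENNReal.ofReal_toReal (measure_ne_top P _)).symm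
      have hbeta : _root_.betaPDF α β s
          = ENNReal.ofReal (c * s ^ (α - 1) * (1 - s) ^ (β - 1)) := by
        unfold _root_.betaPDF
        rw [if_pos hs]
      rw [hνset, hbeta, ← ENNReal.ofReal_mul (mul_nonneg
        (mul_nonneg hc0.le (Real.rpow_nonneg hs.1.le _))
        (Real.rpow_nonneg (by linarith [hs.2] : (0:ℝ) ≤ 1 - s) _))]
    · rw [if_neg hs]
      have : _root_.betaPDF α β s = 0 := by unfold _root_.betaPDF; rw [if_neg hs]
      rw [this, zero_mul]
  -- pass to a Bochner integral
  set g : ℝ → ℝ := fun s => c * s ^ (α - 1) * (1 - s) ^ (β - 1) * H (x / s) with hgdef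
  have hgmeas : Measurable g := by
    exact ((measurable_const.mul (measurable_id'.pow_const _)).mul
      ((measurable_const.sub measurable_id').pow_const _)).mul
      (hHmeas.comp (measurable_const.div measurable_id'))
  have hgnn : 0 ≤ᵐ[volume.restrict (Ioo (0:ℝ) 1)] g := by
    refine (ae_restrict_iff' measurableSet_Ioo).2 (ae_of_all _ fun s hs => ?_)
    have hs0 := hs.1
    have hs1 : (0:ℝ) ≤ 1 - s := by linarith [hs.2]
    exact mul_nonneg (mul_nonneg (mul_nonneg hc0.le (Real.rpow_nonneg hs0.le _))
      (Real.rpow_nonneg hs1 _)) (hHnn _)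
  have h4 : Hab x = ∫ s in Ioo (0:ℝ) 1, g s := by
    rw [integral_eq_lintegral_of_nonneg_ae hgnn hgmeas.aestronglyMeasurable,
      hHab, h2, h3]
  -- change of variables y = x / s
  have himg : (fun s : ℝ => x / s) '' Ioo 0 1 = Ioi x := by
    ext y
    constructor
    · rintro ⟨s, ⟨hs0, hs1⟩, rfl⟩
      exact (lt_div_iff₀ hs0).2 (mul_lt_of_lt_one_right hx hs1)
    · intro hy
      have hy0 : 0 < y := hx.trans hy
      exact ⟨x / y, ⟨div_pos hx hy0, (div_lt_one hy0).2 hy⟩, by field_simp⟩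
  have hderiv : ∀ s ∈ Ioo (0:ℝ) 1,
      HasDerivWithinAt (fun s : ℝ => x / s) (-(x / s ^ 2)) (Ioo 0 1) s := by
    intro s hs
    have h' : HasDerivAt (fun s : ℝ => x / s) (-(x / s ^ 2)) s := by
      simpa [div_eq_mul_inv, mul_neg, neg_mul, mul_comm] using
        (hasDerivAt_inv hs.1.ne').const_mul x
    exact h'.hasDerivWithinAt
  have hinj : InjOn (fun s : ℝ => x / s) (Ioo 0 1) := by
    intro a _ b _ hab
    simp only [div_eq_mul_inv] at hab
    exact inv_injective (mul_left_cancel₀ hx.ne' hab)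
  have h5 : (∫ y in Ioi x, (y - x) ^ (β - 1) * (y ^ (-α - β) * H y))
      = ∫ s in Ioo (0:ℝ) 1,
          x ^ (-α) * (s ^ (α - 1) * ((1 - s) ^ (β - 1) * H (x / s))) := by
    rw [← himg,
      integral_image_eq_integral_abs_deriv_smul measurableSet_Ioo hderiv hinj]
    refine setIntegral_congr_fun measurableSet_Ioo fun s hs => ?_
    rw [smul_eq_mul]
    exact weyl_aux_pt α β x s (H (x / s)) hx hs.1 hs.2
  rw [h4, h5, MeasureTheory.integral_const_mul]
  have hgI : (∫ s in Ioo (0:ℝ) 1, g s)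
      = c * ∫ s in Ioo (0:ℝ) 1, s ^ (α - 1) * ((1 - s) ^ (β - 1) * H (x / s)) := by
    rw [← MeasureTheory.integral_const_mul]
    refine integral_congr_ae (ae_of_all _ fun s => ?_)
    simp only [hgdef]
    ring
  rw [hgI]
  have hxne : x ^ α ≠ 0 := (Real.rpow_pos_of_pos hx α).ne'
  have hxneg : x ^ (-α) = (x ^ α)⁻¹ := Real.rpow_neg hx.le α
  rw [hxneg, hcdef]
  field_simp
end

section
/- Let S be uniformly distributed on (0,1), independent of a positive random variable R with distribution function H satisfying H(0)=0 and upper endpoint ω. Let H_{1,1} be the distribution function of W = RS and h_{1,1} its density. Then H(x) = H_{1,1}(x) − x·h_{1,1}(x) for all x ∈ (0, ω). -/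
open MeasureTheory ProbabilityTheory Real Filter Topology Set
open scoped ENNReal

theorem uniform_product_df_identity
    {Ω : Type*} [MeasurableSpace Ω] (P : Measure Ω) [IsProbabilityMeasure P]
    (R S : Ω → ℝ) (hR : Measurable R) (hS : Measurable S)
    (hRpos : ∀ᵐ ω ∂P, 0 < R ω)
    (hind : IndepFun R S P)
    -- `S` is uniformly distributed on `(0,1)`
    (hSlaw : Measure.map S P = volume.restrict (Set.Ioo (0 : ℝ) 1))
    -- `H` is the df of `R`, `H11` the df of `W = R·S` and `h11` its density
    (H H11 h11 : ℝ → ℝ)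
    (hH : ∀ x, H x = (P {ω | R ω ≤ x}).toReal)
    (hH11 : ∀ x, H11 x = (P {ω | R ω * S ω ≤ x}).toReal)
    -- `ϖ` is the upper endpoint of `H`
    (ϖ : ℝ≥0∞) (hϖ : ∀ x : ℝ, ENNReal.ofReal x < ϖ ↔ H x < 1)
    (hh11dens : Measure.map (fun ω => R ω * S ω) P =
      volume.withDensity (fun x => ENNReal.ofReal (h11 x)))
    (hh11 : ∀ x : ℝ, 0 < x → ENNReal.ofReal x < ϖ →
      h11 x = ∫ y in Set.Ioi x, y⁻¹ ∂(Measure.map R P)) :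
    ∀ x : ℝ, 0 < x → ENNReal.ofReal x < ϖ →
      H x = H11 x - x * h11 x := by
  intro x hx hxϖ
  set μ := Measure.map R P with hμdef
  haveI hμprob : IsProbabilityMeasure μ := Measure.isProbabilityMeasure_map hR.aemeasurable
  -- μ gives no mass to (-∞, 0]
  have hμ0 : μ (Iic 0) = 0 := by
    rw [hμdef, Measure.map_apply hR measurableSet_Iic]
    rw [ae_iff] at hRpos
    convert hRpos using 2
    ext ω; simp [not_lt]
  have hμpos : ∀ᵐ y ∂μ, 0 < y := by
    rw [ae_iff]
    convert hμ0 using 2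
    ext y; simp [not_lt]
  -- S is a.s. positive
  have hSpos : ∀ᵐ ω ∂P, 0 < S ω := by
    rw [ae_iff]
    have hset : {ω | ¬ 0 < S ω} = S ⁻¹' (Iic 0) := by ext ω; simp [not_lt]
    rw [hset, ← Measure.map_apply hS measurableSet_Iic, hSlaw,
      Measure.restrict_apply measurableSet_Iic]
    have : Iic (0:ℝ) ∩ Ioo 0 1 = ∅ := by
      ext y; simp only [mem_inter_iff, mem_Iic, mem_Ioo, mem_empty_iff_false, iff_false]
      rintro ⟨h1, h2, _⟩; linarith
    rw [this, measure_empty]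
  have hmulpos : ∀ᵐ ω ∂P, 0 < R ω * S ω := by
    filter_upwards [hRpos, hSpos] with ω h1 h2 using mul_pos h1 h2
  set ν := Measure.map (fun ω => R ω * S ω) P with hνdef
  have hν0 : ν (Iic 0) = 0 := by
    rw [hνdef, Measure.map_apply (show Measurable (fun ω => R ω * S ω) from hR.mul hS) measurableSet_Iic]
    rw [ae_iff] at hmulpos
    convert hmulpos using 2
    ext ω; simp [not_lt]
  -- integrability of y⁻¹ on (t, ∞)
  have hInt : ∀ t : ℝ, 0 < t → Integrable (fun y => y⁻¹) (μ.restrict (Ioi t)) := by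
    intro t ht
    refine Integrable.mono' (integrable_const t⁻¹) measurable_inv.aestronglyMeasurable ?_
    rw [ae_restrict_iff' measurableSet_Ioi]
    refine ae_of_all _ fun y hy => ?_
    rw [Real.norm_eq_abs, abs_inv, abs_of_pos (ht.trans hy)]
    exact inv_anti₀ ht hy.le
  have h11nonneg : ∀ t : ℝ, 0 < t → ENNReal.ofReal t < ϖ → 0 ≤ h11 t := by
    intro t ht htϖ
    rw [hh11 t ht htϖ]
    exact setIntegral_nonneg measurableSet_Ioi fun y hy => inv_nonneg.mpr (ht.trans hy).le
  have h11eq : ∀ t : ℝ, 0 < t → ENNReal.ofReal t < ϖ →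
      ENNReal.ofReal (h11 t) = ∫⁻ y in Ioi t, ENNReal.ofReal y⁻¹ ∂μ := by
    intro t ht htϖ
    rw [hh11 t ht htϖ]
    refine ofReal_integral_eq_lintegral_ofReal (hInt t ht) ?_
    filter_upwards [ae_restrict_mem measurableSet_Ioi] with y hy
    exact inv_nonneg.mpr (ht.trans hy).le
  -- H values as ENNReal
  have hHofReal : ENNReal.ofReal (H x) = μ (Iic x) := by
    rw [hH x, ENNReal.ofReal_toReal (measure_ne_top P _)]
    rw [hμdef, Measure.map_apply hR measurableSet_Iic]
    rfl
  -- the double integral swap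
  set F : ℝ → ℝ → ℝ≥0∞ := fun t y => Set.indicator {p : ℝ × ℝ | p.1 < p.2}
      (fun p => ENNReal.ofReal p.2⁻¹) (t, y) with hFdef
  have hFmeas : Measurable (Function.uncurry F) := by
    have : Function.uncurry F = Set.indicator {p : ℝ × ℝ | p.1 < p.2}
        (fun p => ENNReal.ofReal p.2⁻¹) := by
      ext p; cases p; rfl
    rw [this]
    exact (ENNReal.measurable_ofReal.comp (measurable_snd.inv)).indicator
      (measurableSet_lt measurable_fst measurable_snd)
  -- the key computation
  have hG : ∀ y : ℝ, (∫⁻ t in Ioc 0 x, F t y) =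
      ENNReal.ofReal y⁻¹ * volume (Iio y ∩ Ioc 0 x) := by
    intro y
    have : ∀ t, F t y = (Iio y).indicator (fun _ => ENNReal.ofReal y⁻¹) t := by
      intro t
      simp only [hFdef, Set.indicator, mem_setOf_eq, mem_Iio]
    simp_rw [this]
    rw [lintegral_indicator measurableSet_Iio, setLIntegral_const,
      Measure.restrict_apply measurableSet_Iio]
  have hswap : ν (Iic x) = ENNReal.ofReal (H x) + ENNReal.ofReal x * ENNReal.ofReal (h11 x) := by
    have h1 : ν (Iic x) = ν (Ioc 0 x) := by
      apply le_antisymm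
      · calc ν (Iic x) = ν (Iic 0 ∪ Ioc 0 x) := by rw [Set.Iic_union_Ioc_eq_Iic hx.le]
          _ ≤ ν (Iic 0) + ν (Ioc 0 x) := measure_union_le _ _
          _ = ν (Ioc 0 x) := by rw [hν0, zero_add]
      · exact measure_mono Set.Ioc_subset_Iic_self
    have h2 : ν (Ioc 0 x) = ∫⁻ t in Ioc 0 x, ENNReal.ofReal (h11 t) := by
      rw [hh11dens, withDensity_apply _ measurableSet_Ioc]
    have h3 : (∫⁻ t in Ioc 0 x, ENNReal.ofReal (h11 t)) =
        ∫⁻ t in Ioc 0 x, ∫⁻ y, F t y ∂μ := by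
      refine setLIntegral_congr_fun measurableSet_Ioc (fun t ht => ?_)
      have htϖ : ENNReal.ofReal t < ϖ :=
        lt_of_le_of_lt (ENNReal.ofReal_le_ofReal ht.2) hxϖ
      rw [h11eq t ht.1 htϖ]
      rw [← lintegral_indicator measurableSet_Ioi]
      refine lintegral_congr fun y => ?_
      simp only [hFdef, Set.indicator, mem_Ioi, mem_setOf_eq]
    have h4 : (∫⁻ t in Ioc 0 x, ∫⁻ y, F t y ∂μ) =
        ∫⁻ y, (∫⁻ t in Ioc 0 x, F t y) ∂μ := by
      exact lintegral_lintegral_swap (hFmeas.aemeasurable)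
    -- split the μ-integral
    have h5 : (∫⁻ y, (∫⁻ t in Ioc 0 x, F t y) ∂μ) =
        (∫⁻ y in Iic x, (∫⁻ t in Ioc 0 x, F t y) ∂μ) +
        (∫⁻ y in Ioi x, (∫⁻ t in Ioc 0 x, F t y) ∂μ) := by
      rw [← lintegral_add_compl _ measurableSet_Iic, compl_Iic]
    have hIicIoc : (Iic x : Set ℝ) =ᵐ[μ] Ioc 0 x := by
      rw [Filter.eventuallyEq_set]
      filter_upwards [hμpos] with y hy
      simp [mem_Iic, mem_Ioc, hy]
    have h6 : (∫⁻ y in Iic x, (∫⁻ t in Ioc 0 x, F t y) ∂μ) = ENNReal.ofReal (H x) := by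
      rw [setLIntegral_congr hIicIoc]
      have : ∀ y ∈ Ioc 0 x, (∫⁻ t in Ioc 0 x, F t y) = 1 := by
        intro y hy
        rw [hG y]
        have : Iio y ∩ Ioc 0 x = Ioo 0 y := by
          ext t
          simp only [mem_inter_iff, mem_Iio, mem_Ioc, mem_Ioo]
          constructor
          · rintro ⟨h1, h2, h3⟩; exact ⟨h2, h1⟩
          · rintro ⟨h1, h2⟩; exact ⟨h2, h1, le_trans h2.le hy.2⟩
        rw [this, Real.volume_Ioo, sub_zero, ← ENNReal.ofReal_mul (inv_nonneg.mpr hy.1.le),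
          inv_mul_cancel₀ (ne_of_gt hy.1), ENNReal.ofReal_one]
      rw [setLIntegral_congr_fun measurableSet_Ioc this, setLIntegral_one,
        ← setLIntegral_one, ← setLIntegral_congr hIicIoc, setLIntegral_one, hHofReal]
    have h7 : (∫⁻ y in Ioi x, (∫⁻ t in Ioc 0 x, F t y) ∂μ) =
        ENNReal.ofReal x * ENNReal.ofReal (h11 x) := by
      have : ∀ y ∈ Ioi x, (∫⁻ t in Ioc 0 x, F t y) = ENNReal.ofReal y⁻¹ * ENNReal.ofReal x := by
        intro y hy
        rw [hG y]
        have : Iio y ∩ Ioc 0 x = Ioc 0 x := by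
          rw [inter_eq_right]
          exact fun t ht => lt_of_le_of_lt ht.2 hy
        rw [this, Real.volume_Ioc, sub_zero]
      rw [setLIntegral_congr_fun measurableSet_Ioi this]
      have hm : Measurable fun y : ℝ => ENNReal.ofReal y⁻¹ :=
        ENNReal.measurable_ofReal.comp measurable_inv
      rw [lintegral_mul_const _ hm]
      rw [← h11eq x hx hxϖ, mul_comm]
    rw [h1, h2, h3, h4, h5, h6, h7]
  -- conclude
  have hH11x : H11 x = H x + x * h11 x := by
    have hν : ν (Iic x) = P {ω | R ω * S ω ≤ x} := by
      rw [hνdef, Measure.map_apply (show Measurable (fun ω => R ω * S ω) from hR.mul hS) measurableSet_Iic]; rfl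
    have hHnn : 0 ≤ H x := by rw [hH x]; exact ENNReal.toReal_nonneg
    have hmn : 0 ≤ x * h11 x := mul_nonneg hx.le (h11nonneg x hx hxϖ)
    rw [hH11 x, ← hν, hswap, ← ENNReal.ofReal_mul hx.le,
      ← ENNReal.ofReal_add hHnn hmn, ENNReal.toReal_ofReal (add_nonneg hHnn hmn)]
  linarith [hH11x]
end

section
/- Let R, S be independent positive random variables with distribution functions H and G respectively, both vanishing at 0. If H is regularly varying at 0 with index γ > 0 and G is regularly varying at 0 with index α > 0, then the distribution function of W = RS is regularly varying at 0 with index min(γ, α). -/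
open MeasureTheory ProbabilityTheory Real Filter Topology Set
open scoped ENNReal

set_option maxHeartbeats 1000000

/-- A function `F` is regularly varying at `0` with index `γ`. -/
def RegVarAt0 (F : ℝ → ℝ) (γ : ℝ) : Prop :=
  ∀ t : ℝ, 0 < t →
    Filter.Tendsto (fun x => F (t * x) / F x) (nhdsWithin 0 (Set.Ioi 0)) (nhds (t ^ γ))

lemma ev_iff {p : ℝ → Prop} :
    (∀ᶠ x in 𝓝[>] (0:ℝ), p x) ↔ ∃ δ > 0, ∀ x, 0 < x → x < δ → p x := by
  rw [(nhdsGT_basis (0:ℝ)).eventually_iff]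
  constructor
  · rintro ⟨δ, hδ, h⟩
    exact ⟨δ, hδ, fun x hx hxδ => h ⟨hx, hxδ⟩⟩
  · rintro ⟨δ, hδ, h⟩
    exact ⟨δ, hδ, fun x hx => h x hx.1 hx.2⟩

lemma rv_pos {f : ℝ → ℝ} {γ : ℝ} (hf : RegVarAt0 f γ) (hmono : Monotone f)
    (hnn : ∀ x, 0 ≤ f x) :
    ∀ x, 0 < x → 0 < f x := by
  have h1 := hf 1 one_pos
  rw [Metric.tendsto_nhds] at h1
  have := h1 (1/2) (by norm_num)
  rw [ev_iff] at this
  obtain ⟨δ, hδ, h⟩ := this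
  intro x hx
  set y := min x (δ/2) with hy
  have hy0 : 0 < y := lt_min hx (by linarith)
  have hyδ : y < δ := (min_le_right _ _).trans_lt (by linarith)
  have := h y hy0 hyδ
  have hfy : f y ≠ 0 := by
    intro h0
    rw [one_mul, h0] at this
    simp at this
    norm_num at this
  have : 0 < f y := lt_of_le_of_ne (hnn y) (Ne.symm hfy)
  exact this.trans_le (hmono (min_le_left _ _))

lemma rv_bounds {f : ℝ → ℝ} {γ : ℝ} (hf : RegVarAt0 f γ) (hmono : Monotone f)
    (hnn : ∀ x, 0 ≤ f x)
    {t ε : ℝ} (ht : 0 < t) (hε : 0 < ε) :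
    ∃ δ > 0, ∀ y, 0 < y → y < δ →
      (t ^ γ - ε) * f y ≤ f (t * y) ∧ f (t * y) ≤ (t ^ γ + ε) * f y := by
  have h1 := hf t ht
  rw [Metric.tendsto_nhds] at h1
  have := h1 ε hε
  rw [ev_iff] at this
  obtain ⟨δ, hδ, h⟩ := this
  refine ⟨δ, hδ, fun y hy hyδ => ?_⟩
  have hfy : 0 < f y := rv_pos hf hmono hnn y hy
  have hd := h y hy hyδ
  rw [Real.dist_eq, abs_lt] at hd
  constructor
  · have : t ^ γ - ε < f (t * y) / f y := by linarith [hd.1]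
    calc (t ^ γ - ε) * f y ≤ (f (t * y) / f y) * f y := by
          apply mul_le_mul_of_nonneg_right this.le hfy.le
    _ = f (t * y) := by field_simp
  · have : f (t * y) / f y < t ^ γ + ε := by linarith [hd.2]
    calc f (t * y) = (f (t * y) / f y) * f y := by field_simp
    _ ≤ (t ^ γ + ε) * f y := mul_le_mul_of_nonneg_right this.le hfy.le

lemma exists_dyadic {x₀ x : ℝ} (hx : 0 < x) (hxx : x ≤ x₀) :
    ∃ n : ℕ, 2 ^ n * x ≤ x₀ ∧ x₀ < 2 ^ (n + 1) * x := by
  obtain ⟨N, hN⟩ := pow_unbounded_of_one_lt (x₀ / x) (by norm_num : (1:ℝ) < 2)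
  have hN' : ¬ (2 ^ N * x ≤ x₀) := by
    rw [div_lt_iff₀ hx] at hN
    push_neg
    linarith
  set P : ℕ → Prop := fun n => 2 ^ n * x ≤ x₀ with hP
  have hP0 : P 0 := by simpa [hP] using hxx
  classical
  set n := Nat.findGreatest P N with hn
  have hnN : n ≤ N := Nat.findGreatest_le N
  have hspec : P n := Nat.findGreatest_spec (Nat.zero_le N) hP0
  have hlt : n < N := by
    rcases lt_or_eq_of_le hnN with h | h
    · exact h
    · exact absurd (h ▸ hspec) hN'
  have hnot : ¬ P (n + 1) := Nat.findGreatest_is_greatest (Nat.lt_succ_self n) hlt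
  refine ⟨n, hspec, ?_⟩
  rw [hP] at hnot
  push_neg at hnot
  exact lt_of_not_ge (by simpa using hnot)

lemma iter_half {f : ℝ → ℝ} {r δ₀ : ℝ} (hδ₀ : 0 < δ₀)
    (hstep : ∀ y, 0 < y → y < δ₀ → f ((1/2) * y) ≤ r * f y) (hr : 0 ≤ r) :
    ∀ n : ℕ, f (δ₀ / 2 / 2 ^ n) ≤ r ^ n * f (δ₀ / 2) := by
  intro n
  induction n with
  | zero => simp
  | succ n ih =>
    have hy : 0 < δ₀ / 2 / 2 ^ n := by positivity
    have hyδ : δ₀ / 2 / 2 ^ n < δ₀ := by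
      rw [div_lt_iff₀ (by positivity : (0:ℝ) < 2 ^ n)]
      have : (1:ℝ) ≤ 2 ^ n := one_le_pow₀ (by norm_num : (1:ℝ) ≤ 2)
      nlinarith
    have := hstep _ hy hyδ
    have heq : (1/2 : ℝ) * (δ₀ / 2 / 2 ^ n) = δ₀ / 2 / 2 ^ (n+1) := by
      ring
    rw [heq] at this
    calc f (δ₀ / 2 / 2 ^ (n+1)) ≤ r * f (δ₀ / 2 / 2 ^ n) := this
    _ ≤ r * (r ^ n * f (δ₀ / 2)) := mul_le_mul_of_nonneg_left ih hr
    _ = r ^ (n+1) * f (δ₀ / 2) := by ring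

lemma iter_half_lower {f : ℝ → ℝ} {r δ₀ : ℝ} (hδ₀ : 0 < δ₀)
    (hstep : ∀ y, 0 < y → y < δ₀ → r * f y ≤ f ((1/2) * y)) (hr : 0 ≤ r) :
    ∀ n : ℕ, r ^ n * f (δ₀ / 2) ≤ f (δ₀ / 2 / 2 ^ n) := by
  intro n
  induction n with
  | zero => simp
  | succ n ih =>
    have hy : 0 < δ₀ / 2 / 2 ^ n := by positivity
    have hyδ : δ₀ / 2 / 2 ^ n < δ₀ := by
      rw [div_lt_iff₀ (by positivity : (0:ℝ) < 2 ^ n)]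
      have : (1:ℝ) ≤ 2 ^ n := one_le_pow₀ (by norm_num : (1:ℝ) ≤ 2)
      nlinarith
    have := hstep _ hy hyδ
    have heq : (1/2 : ℝ) * (δ₀ / 2 / 2 ^ n) = δ₀ / 2 / 2 ^ (n+1) := by
      ring
    rw [heq] at this
    calc r ^ (n+1) * f (δ₀ / 2) = r * (r ^ n * f (δ₀ / 2)) := by ring
    _ ≤ r * f (δ₀ / 2 / 2 ^ n) := mul_le_mul_of_nonneg_left ih hr
    _ ≤ f (δ₀ / 2 / 2 ^ (n+1)) := this

lemma rv_poly_upper {f : ℝ → ℝ} {γ : ℝ} (hf : RegVarAt0 f γ) (hmono : Monotone f)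
    (hnn : ∀ x, 0 ≤ f x) {δ : ℝ} (hδ : 0 < δ) (hδγ : δ < γ) :
    ∃ C > 0, ∃ x₀ > 0, ∀ x, 0 < x → x ≤ x₀ → f x ≤ C * x ^ (γ - δ) := by
  set r : ℝ := (1/2 : ℝ) ^ (γ - δ) with hr
  have hrpos : 0 < r := Real.rpow_pos_of_pos (by norm_num) _
  have hεpos : 0 < r - (1/2 : ℝ) ^ γ := by
    have : ((1:ℝ)/2) ^ γ < ((1:ℝ)/2) ^ (γ - δ) :=
      Real.rpow_lt_rpow_of_exponent_gt (by norm_num) (by norm_num) (by linarith)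
    linarith
  obtain ⟨δ₀, hδ₀, hb⟩ := rv_bounds hf hmono hnn (t := 1/2) (by norm_num) hεpos
  set x₀ : ℝ := δ₀ / 2 with hx₀
  have hx₀pos : 0 < x₀ := by positivity
  have hstep : ∀ y, 0 < y → y < δ₀ → f ((1/2) * y) ≤ r * f y := by
    intro y hy hyδ
    have := (hb y hy hyδ).2
    calc f ((1/2) * y) ≤ ((1/2:ℝ) ^ γ + (r - (1/2:ℝ) ^ γ)) * f y := this
    _ = r * f y := by ring_nf
  have hiter := iter_half hδ₀ hstep hrpos.le
  have hfx₀pos : 0 < f x₀ := rv_pos hf hmono hnn x₀ hx₀pos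
  refine ⟨f x₀ * (2 / x₀) ^ (γ - δ),
    mul_pos hfx₀pos (Real.rpow_pos_of_pos (by positivity) _), x₀, hx₀pos, ?_⟩
  intro x hx hxx
  obtain ⟨n, hn1, hn2⟩ := exists_dyadic hx hxx
  have h1 : f x ≤ r ^ n * f x₀ := by
    have hxle : x ≤ x₀ / 2 ^ n := by
      rw [le_div_iff₀ (by positivity : (0:ℝ) < 2 ^ n)]
      linarith [hn1]
    exact le_trans (hmono hxle) (hiter n)
  have hrn : r ^ n = (((1:ℝ)/2) ^ n : ℝ) ^ (γ - δ) := by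
    rw [hr, ← Real.rpow_natCast ((1/2 : ℝ) ^ (γ - δ)) n, ← Real.rpow_natCast ((1:ℝ)/2) n,
      ← Real.rpow_mul (by norm_num), ← Real.rpow_mul (by norm_num), mul_comm]
  have hbase : ((1:ℝ)/2) ^ n ≤ 2 / x₀ * x := by
    rw [div_mul_eq_mul_div, le_div_iff₀ hx₀pos]
    have h2 : (1/2:ℝ) ^ n * x₀ < 2 * x := by
      have hpow : (0:ℝ) < 2 ^ n := by positivity
      have : ((1:ℝ)/2) ^ n = 1 / 2 ^ n := by
        rw [div_pow]; norm_num
      rw [this, div_mul_eq_mul_div, one_mul, div_lt_iff₀ hpow]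
      calc x₀ < 2 ^ (n+1) * x := hn2
      _ = 2 * x * 2 ^ n := by ring
    linarith
  have h2 : r ^ n ≤ (2 / x₀ * x) ^ (γ - δ) := by
    rw [hrn]
    exact Real.rpow_le_rpow (by positivity) hbase (by linarith)
  have hfx₀ : 0 ≤ f x₀ := hnn x₀
  calc f x ≤ r ^ n * f x₀ := h1
  _ ≤ (2 / x₀ * x) ^ (γ - δ) * f x₀ := mul_le_mul_of_nonneg_right h2 hfx₀
  _ = f x₀ * (2 / x₀) ^ (γ - δ) * x ^ (γ - δ) := by
    rw [Real.mul_rpow (by positivity) hx.le]; ring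

lemma rv_poly_lower {f : ℝ → ℝ} {γ : ℝ} (hf : RegVarAt0 f γ) (hmono : Monotone f)
    (hnn : ∀ x, 0 ≤ f x) {δ : ℝ} (hγ : 0 < γ) (hδ : 0 < δ) :
    ∃ c > 0, ∃ x₀ > 0, ∀ x, 0 < x → x ≤ x₀ → c * x ^ (γ + δ) ≤ f x := by
  set r : ℝ := (1/2 : ℝ) ^ (γ + δ) with hr
  have hrpos : 0 < r := Real.rpow_pos_of_pos (by norm_num) _
  have hεpos : 0 < (1/2 : ℝ) ^ γ - r := by
    have : ((1:ℝ)/2) ^ (γ + δ) < ((1:ℝ)/2) ^ γ :=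
      Real.rpow_lt_rpow_of_exponent_gt (by norm_num) (by norm_num) (by linarith)
    linarith
  obtain ⟨δ₀, hδ₀, hb⟩ := rv_bounds hf hmono hnn (t := 1/2) (by norm_num) hεpos
  set x₀ : ℝ := δ₀ / 2 with hx₀
  have hx₀pos : 0 < x₀ := by positivity
  have hfx₀pos : 0 < f x₀ := rv_pos hf hmono hnn x₀ hx₀pos
  have hstep : ∀ y, 0 < y → y < δ₀ → r * f y ≤ f ((1/2) * y) := by
    intro y hy hyδ
    have := (hb y hy hyδ).1
    calc r * f y = ((1/2:ℝ) ^ γ - ((1/2:ℝ) ^ γ - r)) * f y := by ring_nf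
    _ ≤ f ((1/2) * y) := this
  have hiter := iter_half_lower hδ₀ hstep hrpos.le
  refine ⟨f x₀ * (1 / (2 * x₀)) ^ (γ + δ),
    mul_pos hfx₀pos (Real.rpow_pos_of_pos (by positivity) _), x₀, hx₀pos, ?_⟩
  intro x hx hxx
  obtain ⟨n, hn1, hn2⟩ := exists_dyadic hx hxx
  have h1 : r ^ (n+1) * f x₀ ≤ f x := by
    have hxge : x₀ / 2 ^ (n+1) ≤ x := by
      rw [div_le_iff₀ (by positivity : (0:ℝ) < 2 ^ (n+1))]
      nlinarith [hn2]
    exact le_trans (hiter (n+1)) (hmono hxge)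
  have hrn : r ^ (n+1) = (((1:ℝ)/2) ^ (n+1) : ℝ) ^ (γ + δ) := by
    rw [hr, ← Real.rpow_natCast ((1/2 : ℝ) ^ (γ + δ)) (n+1), ← Real.rpow_natCast ((1:ℝ)/2) (n+1),
      ← Real.rpow_mul (by norm_num), ← Real.rpow_mul (by norm_num), mul_comm]
  have hbase : 1 / (2 * x₀) * x ≤ ((1:ℝ)/2) ^ (n+1) := by
    have hpow : (0:ℝ) < 2 ^ n := by positivity
    have heq : ((1:ℝ)/2) ^ (n+1) = 1 / (2 * 2 ^ n) := by
      rw [div_pow]; ring_nf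
    rw [heq, div_mul_eq_mul_div, one_mul, div_le_div_iff₀ (by positivity) (by positivity)]
    nlinarith [hn1]
  have h2 : (1 / (2 * x₀) * x) ^ (γ + δ) ≤ r ^ (n+1) := by
    rw [hrn]
    exact Real.rpow_le_rpow (by positivity) hbase (by linarith)
  calc f x₀ * (1 / (2 * x₀)) ^ (γ + δ) * x ^ (γ + δ)
      = (1 / (2 * x₀) * x) ^ (γ + δ) * f x₀ := by
        rw [Real.mul_rpow (by positivity) hx.le]; ring
  _ ≤ r ^ (n+1) * f x₀ := mul_le_mul_of_nonneg_right h2 hfx₀pos.le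
  _ ≤ f x := h1

lemma rv_bounds_sqrt {f : ℝ → ℝ} {γ : ℝ} (hf : RegVarAt0 f γ) (hmono : Monotone f)
    (hnn : ∀ x, 0 ≤ f x) {t ε : ℝ} (ht : 0 < t) (hε : 0 < ε) :
    ∀ᶠ x in 𝓝[>] (0:ℝ),
      (t ^ γ - ε) * f (Real.sqrt x) ≤ f (t * Real.sqrt x) ∧
        f (t * Real.sqrt x) ≤ (t ^ γ + ε) * f (Real.sqrt x) := by
  obtain ⟨δ, hδ, h⟩ := rv_bounds hf hmono hnn ht hε
  rw [ev_iff]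
  refine ⟨δ ^ 2, by positivity, fun x hx hxδ => ?_⟩
  exact h _ (Real.sqrt_pos.2 hx) ((Real.sqrt_lt' hδ).2 hxδ)

lemma pow_rpow_comm {x : ℝ} (hx : 0 ≤ x) (y : ℝ) (n : ℕ) :
    (x ^ n) ^ y = (x ^ y) ^ n := by
  rw [← Real.rpow_natCast x n, ← Real.rpow_mul hx, ← Real.rpow_natCast (x ^ y) n,
    ← Real.rpow_mul hx, mul_comm]

set_option linter.unusedSectionVars false

section Main

variable {Ω : Type*} [MeasurableSpace Ω] {P : Measure Ω} [IsProbabilityMeasure P]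
  {R S : Ω → ℝ}

lemma cdf_mono (P : Measure Ω) [IsProbabilityMeasure P] (f : Ω → ℝ) :
    Monotone (fun x => (P {ω | f ω ≤ x}).toReal) := by
  intro a b hab
  exact ENNReal.toReal_mono (measure_ne_top _ _)
    (measure_mono (fun ω h => le_trans h hab))

lemma indep_meas (hind : IndepFun R S P) {A B : Set ℝ}
    (hA : MeasurableSet A) (hB : MeasurableSet B) :
    P ({ω | R ω ∈ A} ∩ {ω | S ω ∈ B}) = P {ω | R ω ∈ A} * P {ω | S ω ∈ B} :=
  (indepFun_iff_measure_inter_preimage_eq_mul.mp hind) A B hA hB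

lemma repS (hR : Measurable R) (hS : Measurable S) (hind : IndepFun R S P)
    {T : Set (ℝ × ℝ)} (hT : MeasurableSet T) :
    P {ω | (R ω, S ω) ∈ T} = ∫⁻ s, (P.map R) {r | (r, s) ∈ T} ∂(P.map S) := by
  have hmap : P.map (fun ω => (R ω, S ω)) = (P.map R).prod (P.map S) :=
    (indepFun_iff_map_prod_eq_prod_map_map hR.aemeasurable hS.aemeasurable).mp hind
  haveI := Measure.isProbabilityMeasure_map (μ := P) hR.aemeasurable
  haveI := Measure.isProbabilityMeasure_map (μ := P) hS.aemeasurable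
  have h1 : P {ω | (R ω, S ω) ∈ T} = (P.map (fun ω => (R ω, S ω))) T := by
    rw [Measure.map_apply (hR.prodMk hS) hT]; rfl
  rw [h1, hmap, Measure.prod_apply_symm hT]
  rfl

lemma repR (hR : Measurable R) (hS : Measurable S) (hind : IndepFun R S P)
    {T : Set (ℝ × ℝ)} (hT : MeasurableSet T) :
    P {ω | (R ω, S ω) ∈ T} = ∫⁻ r, (P.map S) {s | (r, s) ∈ T} ∂(P.map R) := by
  have hmap : P.map (fun ω => (R ω, S ω)) = (P.map R).prod (P.map S) :=
    (indepFun_iff_map_prod_eq_prod_map_map hR.aemeasurable hS.aemeasurable).mp hind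
  haveI := Measure.isProbabilityMeasure_map (μ := P) hR.aemeasurable
  haveI := Measure.isProbabilityMeasure_map (μ := P) hS.aemeasurable
  have h1 : P {ω | (R ω, S ω) ∈ T} = (P.map (fun ω => (R ω, S ω))) T := by
    rw [Measure.map_apply (hR.prodMk hS) hT]; rfl
  rw [h1, hmap, Measure.prod_apply hT]
  rfl

lemma map_Iic (hR : Measurable R) (y : ℝ) :
    (P.map R) (Iic y) = P {ω | R ω ≤ y} := by
  rw [Measure.map_apply hR measurableSet_Iic]; rfl

lemma lower_prod (hind : IndepFun R S P)
    (hps : P {ω | ¬(0 < R ω ∧ 0 < S ω)} = 0) {a b x : ℝ}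
    (ha : 0 < a) (hb : 0 < b) (hab : a * b ≤ x) :
    P {ω | R ω ≤ a} * P {ω | S ω ≤ b} ≤ P {ω | R ω * S ω ≤ x} := by
  show P {ω | R ω ∈ Iic a} * P {ω | S ω ∈ Iic b} ≤ _
  rw [← indep_meas hind measurableSet_Iic measurableSet_Iic]
  have hc : P ({ω | R ω ∈ Iic a} ∩ {ω | S ω ∈ Iic b} ∩ {ω | 0 < R ω ∧ 0 < S ω})
      = P ({ω | R ω ∈ Iic a} ∩ {ω | S ω ∈ Iic b}) := by
    apply measure_inter_conull
    rw [compl_setOf]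
    exact hps
  rw [← hc]
  apply measure_mono
  rintro ω ⟨⟨h1, h2⟩, h3, h4⟩
  calc R ω * S ω ≤ a * b := mul_le_mul h1 h2 h4.le ha.le
  _ ≤ x := hab


lemma two_pow_rpow {γ : ℝ} (j : ℕ) :
    (((2:ℝ) ^ j) ^ γ) = ((((1:ℝ)/2) ^ γ) ^ j)⁻¹ := by
  have h1 : ((1:ℝ)/2) ^ γ = ((2:ℝ) ^ γ)⁻¹ := by
    rw [show ((1:ℝ)/2) = 2⁻¹ by norm_num, Real.inv_rpow (by norm_num : (0:ℝ) ≤ 2)]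
  rw [h1, inv_pow, inv_inv, pow_rpow_comm (by norm_num : (0:ℝ) ≤ 2)]

lemma lemA {γ α : ℝ} (hγ : 0 < γ) (hγα : γ ≤ α)
    (hR : Measurable R) (hS : Measurable S) (hind : IndepFun R S P)
    (hps : P {ω | ¬(0 < R ω ∧ 0 < S ω)} = 0)
    (hRrv : RegVarAt0 (fun x => (P {ω | R ω ≤ x}).toReal) γ)
    (hSrv : RegVarAt0 (fun x => (P {ω | S ω ≤ x}).toReal) α)
    {C : ℝ} (hC : 0 < C) :
    ∀ᶠ x in 𝓝[>] (0:ℝ),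
      C * ((P {ω | R ω ≤ Real.sqrt x}).toReal * (P {ω | S ω ≤ Real.sqrt x}).toReal)
        ≤ (P {ω | R ω * S ω ≤ x}).toReal := by
  set h : ℝ → ℝ := fun y => (P {ω | R ω ≤ y}).toReal with hh
  set g : ℝ → ℝ := fun y => (P {ω | S ω ≤ y}).toReal with hgdef
  have hmono : Monotone h := cdf_mono P R
  have gmono : Monotone g := cdf_mono P S
  have hnn : ∀ y, 0 ≤ h y := fun y => ENNReal.toReal_nonneg
  have gnn : ∀ y, 0 ≤ g y := fun y => ENNReal.toReal_nonneg
  set a : ℝ := ((1:ℝ)/2) ^ γ with ha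
  have ha0 : 0 < a := Real.rpow_pos_of_pos (by norm_num) _
  have ha1 : a < 1 := Real.rpow_lt_one (by norm_num) (by norm_num) hγ
  set N : ℕ := ⌈4 * C / (1 - a)⌉₊ + 1 with hN
  have hNC : C ≤ (N : ℝ) * ((1 - a) / 4) := by
    have h1 : (4 * C / (1 - a)) ≤ (N : ℝ) := by
      refine le_trans (Nat.le_ceil _) ?_
      push_cast [hN]
      linarith
    rw [div_le_iff₀ (by linarith : (0:ℝ) < 1 - a)] at h1
    linarith
  set ε : ℝ := min ((1 - a) * a ^ N / 4) (1/2) with hε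
  have hε0 : 0 < ε := by
    apply lt_min _ (by norm_num)
    have : (0:ℝ) < a ^ N := pow_pos ha0 N
    nlinarith
  have hεhalf : ε ≤ 1/2 := min_le_right _ _
  -- eventual bounds for h at scales (1/2)^j and for g at scales 2^j
  have hevh : ∀ j : ℕ, ∀ᶠ x in 𝓝[>] (0:ℝ),
      (a ^ j - ε) * h (Real.sqrt x) ≤ h (((1:ℝ)/2) ^ j * Real.sqrt x) ∧
        h (((1:ℝ)/2) ^ j * Real.sqrt x) ≤ (a ^ j + ε) * h (Real.sqrt x) := by
    intro j
    have hb := rv_bounds_sqrt hRrv hmono hnn (t := ((1:ℝ)/2) ^ j) (by positivity) hε0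
    have heq : (((1:ℝ)/2) ^ j) ^ γ = a ^ j := pow_rpow_comm (by norm_num) γ j
    filter_upwards [hb] with x hx
    rw [← heq]
    exact hx
  have hevg : ∀ j : ℕ, ∀ᶠ x in 𝓝[>] (0:ℝ),
      ((a ^ j)⁻¹ - ε) * g (Real.sqrt x) ≤ g ((2:ℝ) ^ j * Real.sqrt x) := by
    intro j
    have hb := rv_bounds_sqrt hSrv gmono gnn (t := (2:ℝ) ^ j) (by positivity) hε0
    filter_upwards [hb] with x hx
    refine le_trans (mul_le_mul_of_nonneg_right ?_ (gnn _)) hx.1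
    have h1 : ((2:ℝ) ^ j) ^ γ = (a ^ j)⁻¹ := two_pow_rpow j
    have h2 : ((2:ℝ) ^ j) ^ γ ≤ ((2:ℝ) ^ j) ^ α :=
      Real.rpow_le_rpow_of_exponent_le (one_le_pow₀ (by norm_num)) hγα
    linarith
  have hall : ∀ᶠ x in 𝓝[>] (0:ℝ), ∀ j ∈ Finset.range (N + 1),
      ((a ^ j - ε) * h (Real.sqrt x) ≤ h (((1:ℝ)/2) ^ j * Real.sqrt x) ∧
        h (((1:ℝ)/2) ^ j * Real.sqrt x) ≤ (a ^ j + ε) * h (Real.sqrt x)) ∧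
      ((a ^ j)⁻¹ - ε) * g (Real.sqrt x) ≤ g ((2:ℝ) ^ j * Real.sqrt x) :=
    Filter.eventually_all_finset _ |>.2 (fun j _ => (hevh j).and (hevg j))
  filter_upwards [hall, self_mem_nhdsWithin] with x hbnds hx
  replace hx : 0 < x := hx
  set sx := Real.sqrt x with hsx
  have hsx0 : 0 < sx := Real.sqrt_pos.2 hx
  -- the annuli events
  set E : ℕ → Set Ω := fun j =>
    {ω | R ω ∈ Ioc (((1:ℝ)/2) ^ (j+1) * sx) (((1:ℝ)/2) ^ j * sx)} ∩
      {ω | S ω ∈ Iic ((2:ℝ) ^ j * sx)} with hE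
  have hEmeas : ∀ j, MeasurableSet (E j) := fun j =>
    (hR measurableSet_Ioc).inter (hS measurableSet_Iic)
  -- disjointness
  have hdisj : ∀ i j : ℕ, i < j → Disjoint (E i) (E j) := by
    intro i j hij
    rw [Set.disjoint_left]
    rintro ω ⟨⟨hi1, hi2⟩, _⟩ ⟨⟨hj1, hj2⟩, _⟩
    have : ((1:ℝ)/2) ^ j ≤ ((1:ℝ)/2) ^ (i+1) :=
      pow_le_pow_of_le_one (by norm_num) (by norm_num) hij
    have : ((1:ℝ)/2) ^ j * sx ≤ ((1:ℝ)/2) ^ (i+1) * sx :=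
      mul_le_mul_of_nonneg_right this hsx0.le
    exact absurd (le_trans hj2 this) (not_le.2 hi1)
  -- union of annuli is inside the event
  have hsub : (⋃ j ∈ Finset.range N, E j) ∩ {ω | 0 < R ω ∧ 0 < S ω}
      ⊆ {ω | R ω * S ω ≤ x} := by
    rintro ω ⟨hU, hw1, hw2⟩
    simp only [Finset.mem_range, Set.mem_iUnion] at hU
    obtain ⟨j, _, ⟨⟨_, hR2⟩, hS2⟩⟩ := hU
    show R ω * S ω ≤ x
    calc R ω * S ω ≤ (((1:ℝ)/2) ^ j * sx) * ((2:ℝ) ^ j * sx) :=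
          mul_le_mul hR2 hS2 hw2.le (by positivity)
    _ = (((1:ℝ)/2) ^ j * (2:ℝ) ^ j) * (sx * sx) := by ring
    _ = x := by
        rw [← mul_pow]
        norm_num
        exact Real.mul_self_sqrt hx.le
  -- measure inequality
  have hKge : ∑ j ∈ Finset.range N, P (E j) ≤ P {ω | R ω * S ω ≤ x} := by
    rw [← measure_biUnion_finset ?hd (fun j _ => hEmeas j)]
    case hd =>
      intro i hi j hj hij
      rcases hij.lt_or_gt with h | h
      · exact hdisj i j h
      · exact (hdisj j i h).symm
    calc P (⋃ j ∈ Finset.range N, E j)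
        = P ((⋃ j ∈ Finset.range N, E j) ∩ {ω | 0 < R ω ∧ 0 < S ω}) := by
          rw [measure_inter_conull]
          rw [compl_setOf]
          exact hps
    _ ≤ P {ω | R ω * S ω ≤ x} := measure_mono hsub
  -- per-annulus real lower bound
  have hperj : ∀ j ∈ Finset.range N,
      (1 - a) / 4 * (h sx * g sx) ≤ (P (E j)).toReal := by
    intro j hj
    rw [Finset.mem_range] at hj
    have hjN : j ∈ Finset.range (N + 1) := Finset.mem_range.2 (by omega)
    have hj1N : j + 1 ∈ Finset.range (N + 1) := Finset.mem_range.2 (by omega)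
    have hPE : (P (E j)).toReal
        = (h (((1:ℝ)/2) ^ j * sx) - h (((1:ℝ)/2) ^ (j+1) * sx)) * g ((2:ℝ) ^ j * sx) := by
      rw [hE]
      rw [indep_meas hind measurableSet_Ioc measurableSet_Iic, ENNReal.toReal_mul]
      congr 1
      have hset : {ω | R ω ∈ Ioc (((1:ℝ)/2) ^ (j+1) * sx) (((1:ℝ)/2) ^ j * sx)}
          = {ω | R ω ≤ ((1:ℝ)/2) ^ j * sx} \ {ω | R ω ≤ ((1:ℝ)/2) ^ (j+1) * sx} := by
        ext ω
        simp only [Set.mem_Ioc, Set.mem_setOf_eq, Set.mem_diff, not_le]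
        tauto
      have hsub2 : {ω | R ω ≤ ((1:ℝ)/2) ^ (j+1) * sx} ⊆ {ω | R ω ≤ ((1:ℝ)/2) ^ j * sx} := by
        intro ω hω
        refine le_trans hω (mul_le_mul_of_nonneg_right ?_ hsx0.le)
        exact pow_le_pow_of_le_one (by norm_num) (by norm_num) (by omega)
      rw [hset, measure_diff hsub2 (hR measurableSet_Iic).nullMeasurableSet (measure_ne_top _ _),
        ENNReal.toReal_sub_of_le (measure_mono hsub2) (measure_ne_top _ _)]
    rw [hPE]
    have hbj := (hbnds j hjN).1
    have hbj1 := (hbnds (j+1) hj1N).1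
    have hgj := (hbnds j hjN).2
    have hεa : 2 * ε ≤ (1 - a) * a ^ j / 2 := by
      have h1 : ε ≤ (1 - a) * a ^ N / 4 := min_le_left _ _
      have h2 : a ^ N ≤ a ^ j :=
        pow_le_pow_of_le_one ha0.le ha1.le (by omega)
      nlinarith
    have hdiff : (1 - a) * a ^ j / 2 * h sx
        ≤ h (((1:ℝ)/2) ^ j * sx) - h (((1:ℝ)/2) ^ (j+1) * sx) := by
      have l1 := hbj.1
      have l2 := hbj1.2
      have : a ^ (j+1) = a ^ j * a := pow_succ a j
      nlinarith [hnn sx]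
    have hgl : (a ^ j)⁻¹ / 2 * g sx ≤ g ((2:ℝ) ^ j * sx) := by
      have hinv : (1:ℝ) ≤ (a ^ j)⁻¹ := by
        have hp : (0:ℝ) < a ^ j := pow_pos ha0 j
        have h1 : a ^ j ≤ 1 := pow_le_one₀ ha0.le ha1.le
        exact (one_le_inv₀ hp).2 h1
      refine le_trans (mul_le_mul_of_nonneg_right ?_ (gnn _)) hgj
      linarith
    have hd0 : 0 ≤ (1 - a) * a ^ j / 2 * h sx := by
      have : 0 < a ^ j := pow_pos ha0 j
      have := hnn sx
      nlinarith
    have hg0 : 0 ≤ (a ^ j)⁻¹ / 2 * g sx := by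
      have : 0 < (a ^ j)⁻¹ := by positivity
      have := gnn sx
      nlinarith
    calc (1 - a) / 4 * (h sx * g sx)
        = ((1 - a) * a ^ j / 2 * h sx) * ((a ^ j)⁻¹ / 2 * g sx) := by
          have hane : (a:ℝ) ^ j ≠ 0 := (pow_pos ha0 j).ne'
          have hcan : a ^ j * (a ^ j)⁻¹ = 1 := mul_inv_cancel₀ hane
          have h' : ((1 - a) * a ^ j / 2 * h sx) * ((a ^ j)⁻¹ / 2 * g sx)
              = (1 - a) * (a ^ j * (a ^ j)⁻¹) / 4 * (h sx * g sx) := by ring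
          rw [h', hcan]
          ring
    _ ≤ (h (((1:ℝ)/2) ^ j * sx) - h (((1:ℝ)/2) ^ (j+1) * sx)) * g ((2:ℝ) ^ j * sx) :=
          mul_le_mul hdiff hgl hg0 (by linarith [hdiff, hd0])
  -- put everything together
  have hsum : (N : ℝ) * ((1 - a) / 4 * (h sx * g sx))
      ≤ ∑ j ∈ Finset.range N, (P (E j)).toReal := by
    have := Finset.card_nsmul_le_sum (Finset.range N)
      (fun j => (P (E j)).toReal) ((1 - a) / 4 * (h sx * g sx)) hperj
    simpa [nsmul_eq_mul] using this
  have htr : ∑ j ∈ Finset.range N, (P (E j)).toReal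
      ≤ (P {ω | R ω * S ω ≤ x}).toReal := by
    rw [← ENNReal.toReal_sum (fun j _ => measure_ne_top _ _)]
    exact ENNReal.toReal_mono (measure_ne_top _ _) hKge
  have hfin : C * (h sx * g sx) ≤ (N : ℝ) * ((1 - a) / 4 * (h sx * g sx)) := by
    have hhg : 0 ≤ h sx * g sx := mul_nonneg (hnn sx) (gnn sx)
    calc C * (h sx * g sx) ≤ ((N:ℝ) * ((1 - a) / 4)) * (h sx * g sx) :=
          mul_le_mul_of_nonneg_right hNC hhg
    _ = (N : ℝ) * ((1 - a) / 4 * (h sx * g sx)) := by ring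
  calc C * (h sx * g sx) ≤ (N : ℝ) * ((1 - a) / 4 * (h sx * g sx)) := hfin
  _ ≤ ∑ j ∈ Finset.range N, (P (E j)).toReal := hsum
  _ ≤ (P {ω | R ω * S ω ≤ x}).toReal := htr


lemma setA_meas {m W : ℝ} : MeasurableSet {p : ℝ × ℝ | m < p.2 ∧ p.1 * p.2 ≤ W} :=
  (measurable_snd measurableSet_Ioi).inter
    ((measurable_fst.mul measurable_snd) measurableSet_Iic)

lemma setB_meas {m W u : ℝ} :
    MeasurableSet {p : ℝ × ℝ | p.2 ≤ m ∧ u < p.1 ∧ p.1 * p.2 ≤ W} :=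
  (measurable_snd measurableSet_Iic).inter
    ((measurable_fst measurableSet_Ioi).inter
      ((measurable_fst.mul measurable_snd) measurableSet_Iic))

lemma estA_upper (hR : Measurable R) (hS : Measurable S) (hind : IndepFun R S P)
    {t x m c : ℝ} (ht : 0 < t) (hx : 0 < x) (hm : 0 < m) (hc : 0 ≤ c)
    (hb : ∀ y, 0 < y → y < x / m →
      (P {ω | R ω ≤ t * y}).toReal ≤ c * (P {ω | R ω ≤ y}).toReal) :
    P {ω | m < S ω ∧ R ω * S ω ≤ t * x}
      ≤ ENNReal.ofReal c * P {ω | m < S ω ∧ R ω * S ω ≤ x} := by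
  have h1 : P {ω | m < S ω ∧ R ω * S ω ≤ t * x}
      = ∫⁻ s, (P.map R) {r | m < s ∧ r * s ≤ t * x} ∂(P.map S) :=
    repS hR hS hind (setA_meas (m := m) (W := t * x))
  have h2 : P {ω | m < S ω ∧ R ω * S ω ≤ x}
      = ∫⁻ s, (P.map R) {r | m < s ∧ r * s ≤ x} ∂(P.map S) :=
    repS hR hS hind (setA_meas (m := m) (W := x))
  rw [h1, h2, ← lintegral_const_mul' _ _ ENNReal.ofReal_ne_top]
  apply lintegral_mono
  intro s
  dsimp only
  by_cases hs : m < s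
  · have hs0 : 0 < s := lt_trans hm hs
    have e1 : {r : ℝ | m < s ∧ r * s ≤ t * x} = Iic (t * x / s) := by
      ext r
      simp only [mem_setOf_eq, mem_Iic, hs, true_and]
      exact (le_div_iff₀ hs0).symm
    have e2 : {r : ℝ | m < s ∧ r * s ≤ x} = Iic (x / s) := by
      ext r
      simp only [mem_setOf_eq, mem_Iic, hs, true_and]
      exact (le_div_iff₀ hs0).symm
    rw [e1, e2, map_Iic hR, map_Iic hR]
    have hy : 0 < x / s := div_pos hx hs0
    have hym : x / s < x / m := div_lt_div_of_pos_left hx hm hs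
    have := hb (x / s) hy hym
    rw [mul_div_assoc]
    calc P {ω | R ω ≤ t * (x / s)}
        = ENNReal.ofReal ((P {ω | R ω ≤ t * (x / s)}).toReal) :=
          (ENNReal.ofReal_toReal (measure_ne_top _ _)).symm
    _ ≤ ENNReal.ofReal (c * (P {ω | R ω ≤ x / s}).toReal) := ENNReal.ofReal_le_ofReal this
    _ = ENNReal.ofReal c * ENNReal.ofReal ((P {ω | R ω ≤ x / s}).toReal) :=
          ENNReal.ofReal_mul hc
    _ = ENNReal.ofReal c * P {ω | R ω ≤ x / s} := by
          rw [ENNReal.ofReal_toReal (measure_ne_top _ _)]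
  · have e1 : {r : ℝ | m < s ∧ r * s ≤ t * x} = ∅ := by
      ext r; simp [hs]
    rw [e1]
    simp

lemma estA_lower (hR : Measurable R) (hS : Measurable S) (hind : IndepFun R S P)
    {t x m c : ℝ} (ht : 0 < t) (hx : 0 < x) (hm : 0 < m) (hc : 0 ≤ c)
    (hb : ∀ y, 0 < y → y < x / m →
      c * (P {ω | R ω ≤ y}).toReal ≤ (P {ω | R ω ≤ t * y}).toReal) :
    ENNReal.ofReal c * P {ω | m < S ω ∧ R ω * S ω ≤ x}
      ≤ P {ω | m < S ω ∧ R ω * S ω ≤ t * x} := by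
  have h1 : P {ω | m < S ω ∧ R ω * S ω ≤ t * x}
      = ∫⁻ s, (P.map R) {r | m < s ∧ r * s ≤ t * x} ∂(P.map S) :=
    repS hR hS hind (setA_meas (m := m) (W := t * x))
  have h2 : P {ω | m < S ω ∧ R ω * S ω ≤ x}
      = ∫⁻ s, (P.map R) {r | m < s ∧ r * s ≤ x} ∂(P.map S) :=
    repS hR hS hind (setA_meas (m := m) (W := x))
  rw [h1, h2, ← lintegral_const_mul' _ _ ENNReal.ofReal_ne_top]
  apply lintegral_mono
  intro s
  dsimp only
  by_cases hs : m < s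
  · have hs0 : 0 < s := lt_trans hm hs
    have e1 : {r : ℝ | m < s ∧ r * s ≤ t * x} = Iic (t * x / s) := by
      ext r
      simp only [mem_setOf_eq, mem_Iic, hs, true_and]
      exact (le_div_iff₀ hs0).symm
    have e2 : {r : ℝ | m < s ∧ r * s ≤ x} = Iic (x / s) := by
      ext r
      simp only [mem_setOf_eq, mem_Iic, hs, true_and]
      exact (le_div_iff₀ hs0).symm
    rw [e1, e2, map_Iic hR, map_Iic hR]
    have hy : 0 < x / s := div_pos hx hs0
    have hym : x / s < x / m := div_lt_div_of_pos_left hx hm hs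
    have := hb (x / s) hy hym
    rw [mul_div_assoc]
    calc ENNReal.ofReal c * P {ω | R ω ≤ x / s}
        = ENNReal.ofReal (c * (P {ω | R ω ≤ x / s}).toReal) := by
          rw [ENNReal.ofReal_mul hc, ENNReal.ofReal_toReal (measure_ne_top _ _)]
    _ ≤ ENNReal.ofReal ((P {ω | R ω ≤ t * (x / s)}).toReal) := ENNReal.ofReal_le_ofReal this
    _ = P {ω | R ω ≤ t * (x / s)} := ENNReal.ofReal_toReal (measure_ne_top _ _)
  · have e2 : {r : ℝ | m < s ∧ r * s ≤ x} = ∅ := by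
      ext r; simp [hs]
    rw [e2]
    simp


lemma estB_upper (hR : Measurable R) (hS : Measurable S) (hind : IndepFun R S P)
    {t x m c : ℝ} (ht : 0 < t) (ht1 : t ≤ 1) (hx : 0 < x) (hm : 0 < m) (hc : 0 ≤ c)
    (hb : ∀ y, 0 < y → y < m →
      (P {ω | S ω ≤ t * y}).toReal ≤ c * (P {ω | S ω ≤ y}).toReal) :
    P {ω | S ω ≤ m ∧ t * x / m < R ω ∧ R ω * S ω ≤ t * x}
      ≤ ENNReal.ofReal c * P {ω | S ω ≤ m ∧ x / m < R ω ∧ R ω * S ω ≤ x}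
        + P {ω | R ω ≤ x / m} * P {ω | S ω ≤ m} := by
  have h1 : P {ω | S ω ≤ m ∧ t * x / m < R ω ∧ R ω * S ω ≤ t * x}
      = ∫⁻ r, (P.map S) {s | s ≤ m ∧ t * x / m < r ∧ r * s ≤ t * x} ∂(P.map R) :=
    repR hR hS hind (setB_meas (m := m) (u := t * x / m) (W := t * x))
  have h2 : P {ω | S ω ≤ m ∧ x / m < R ω ∧ R ω * S ω ≤ x}
      = ∫⁻ r, (P.map S) {s | s ≤ m ∧ x / m < r ∧ r * s ≤ x} ∂(P.map R) :=
    repR hR hS hind (setB_meas (m := m) (u := x / m) (W := x))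
  have key : ∀ r : ℝ, (P.map S) {s | s ≤ m ∧ t * x / m < r ∧ r * s ≤ t * x}
      ≤ (Ioc (t * x / m) (x / m)).indicator (fun _ => (P.map S) (Iic m)) r
        + ENNReal.ofReal c * (P.map S) {s | s ≤ m ∧ x / m < r ∧ r * s ≤ x} := by
    intro r
    by_cases hr : x / m < r
    · have hr0 : 0 < r := lt_trans (div_pos hx hm) hr
      have hxr : x / r < m := by
        rw [div_lt_iff₀ hr0]
        rw [div_lt_iff₀ hm] at hr
        linarith
      have htr : t * x / m < r := by
        have : t * x / m ≤ x / m := by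
          apply div_le_div_of_nonneg_right ?_ hm.le
          nlinarith
        linarith
      have e1 : {s : ℝ | s ≤ m ∧ t * x / m < r ∧ r * s ≤ t * x} = Iic (t * x / r) := by
        ext u
        simp only [mem_setOf_eq, mem_Iic, htr, true_and]
        constructor
        · rintro ⟨_, hu⟩
          rw [le_div_iff₀ hr0, mul_comm]
          exact hu
        · intro hu
          have h3 : t * x / r ≤ x / r := by
            apply div_le_div_of_nonneg_right ?_ hr0.le
            nlinarith
          refine ⟨le_trans hu (le_trans h3 hxr.le), ?_⟩
          rw [le_div_iff₀ hr0, mul_comm] at hu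
          exact hu
      have e2 : {s : ℝ | s ≤ m ∧ x / m < r ∧ r * s ≤ x} = Iic (x / r) := by
        ext u
        simp only [mem_setOf_eq, mem_Iic, hr, true_and]
        constructor
        · rintro ⟨_, hu⟩
          rw [le_div_iff₀ hr0, mul_comm]
          exact hu
        · intro hu
          refine ⟨le_trans hu hxr.le, ?_⟩
          rw [le_div_iff₀ hr0, mul_comm] at hu
          exact hu
      have hind0 : (Ioc (t * x / m) (x / m)).indicator
          (fun _ => (P.map S) (Iic m)) r = 0 := by
        apply Set.indicator_of_notMem
        intro hmem
        exact absurd hr (not_lt.2 hmem.2)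
      rw [e1, e2, hind0, zero_add, map_Iic hS, map_Iic hS]
      have hy : 0 < x / r := div_pos hx hr0
      have := hb (x / r) hy hxr
      rw [mul_div_assoc]
      calc P {ω | S ω ≤ t * (x / r)}
          = ENNReal.ofReal ((P {ω | S ω ≤ t * (x / r)}).toReal) :=
            (ENNReal.ofReal_toReal (measure_ne_top _ _)).symm
      _ ≤ ENNReal.ofReal (c * (P {ω | S ω ≤ x / r}).toReal) := ENNReal.ofReal_le_ofReal this
      _ = ENNReal.ofReal c * P {ω | S ω ≤ x / r} := by
            rw [ENNReal.ofReal_mul hc, ENNReal.ofReal_toReal (measure_ne_top _ _)]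
    · by_cases hr2 : t * x / m < r
      · have hsub : {s : ℝ | s ≤ m ∧ t * x / m < r ∧ r * s ≤ t * x} ⊆ Iic m :=
          fun u hu => hu.1
        have hind1 : (Ioc (t * x / m) (x / m)).indicator
            (fun _ => (P.map S) (Iic m)) r = (P.map S) (Iic m) :=
          Set.indicator_of_mem (Set.mem_Ioc.mpr ⟨hr2, not_lt.1 hr⟩) _
        rw [hind1]
        exact le_trans (measure_mono hsub) (le_add_right le_rfl)
      · have e1 : {s : ℝ | s ≤ m ∧ t * x / m < r ∧ r * s ≤ t * x} = ∅ := by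
          ext u; simp [hr2]
        rw [e1]
        simp
  calc P {ω | S ω ≤ m ∧ t * x / m < R ω ∧ R ω * S ω ≤ t * x}
      = ∫⁻ r, (P.map S) {s | s ≤ m ∧ t * x / m < r ∧ r * s ≤ t * x} ∂(P.map R) := h1
  _ ≤ ∫⁻ r, ((Ioc (t * x / m) (x / m)).indicator (fun _ => (P.map S) (Iic m)) r
        + ENNReal.ofReal c * (P.map S) {s | s ≤ m ∧ x / m < r ∧ r * s ≤ x}) ∂(P.map R) :=
      lintegral_mono key
  _ = (P.map S) (Iic m) * (P.map R) (Ioc (t * x / m) (x / m))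
        + ENNReal.ofReal c * ∫⁻ r, (P.map S) {s | s ≤ m ∧ x / m < r ∧ r * s ≤ x} ∂(P.map R) := by
      rw [lintegral_add_left (measurable_const.indicator measurableSet_Ioc),
        lintegral_indicator_const measurableSet_Ioc,
        lintegral_const_mul' _ _ ENNReal.ofReal_ne_top]
  _ ≤ ENNReal.ofReal c * P {ω | S ω ≤ m ∧ x / m < R ω ∧ R ω * S ω ≤ x}
        + P {ω | R ω ≤ x / m} * P {ω | S ω ≤ m} := by
      rw [← h2]
      rw [add_comm]
      apply add_le_add le_rfl
      rw [mul_comm]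
      apply mul_le_mul' ?_ (le_of_eq (map_Iic hS m))
      rw [← map_Iic hR (x / m)]
      exact measure_mono Ioc_subset_Iic_self

lemma estB_lower (hR : Measurable R) (hS : Measurable S) (hind : IndepFun R S P)
    {t x m c : ℝ} (ht : 0 < t) (ht1 : t ≤ 1) (hx : 0 < x) (hm : 0 < m) (hc : 0 ≤ c)
    (hb : ∀ y, 0 < y → y < m →
      c * (P {ω | S ω ≤ y}).toReal ≤ (P {ω | S ω ≤ t * y}).toReal) :
    ENNReal.ofReal c * P {ω | S ω ≤ m ∧ x / m < R ω ∧ R ω * S ω ≤ x}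
      ≤ P {ω | S ω ≤ m ∧ t * x / m < R ω ∧ R ω * S ω ≤ t * x} := by
  have h1 : P {ω | S ω ≤ m ∧ t * x / m < R ω ∧ R ω * S ω ≤ t * x}
      = ∫⁻ r, (P.map S) {s | s ≤ m ∧ t * x / m < r ∧ r * s ≤ t * x} ∂(P.map R) :=
    repR hR hS hind (setB_meas (m := m) (u := t * x / m) (W := t * x))
  have h2 : P {ω | S ω ≤ m ∧ x / m < R ω ∧ R ω * S ω ≤ x}
      = ∫⁻ r, (P.map S) {s | s ≤ m ∧ x / m < r ∧ r * s ≤ x} ∂(P.map R) :=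
    repR hR hS hind (setB_meas (m := m) (u := x / m) (W := x))
  rw [h1, h2, ← lintegral_const_mul' _ _ ENNReal.ofReal_ne_top]
  apply lintegral_mono
  intro r
  dsimp only
  by_cases hr : x / m < r
  · have hr0 : 0 < r := lt_trans (div_pos hx hm) hr
    have hxr : x / r < m := by
      rw [div_lt_iff₀ hr0]
      rw [div_lt_iff₀ hm] at hr
      linarith
    have htr : t * x / m < r := by
      have : t * x / m ≤ x / m := by
        apply div_le_div_of_nonneg_right ?_ hm.le
        nlinarith
      linarith
    have e1 : {s : ℝ | s ≤ m ∧ t * x / m < r ∧ r * s ≤ t * x} = Iic (t * x / r) := by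
      ext u
      simp only [mem_setOf_eq, mem_Iic, htr, true_and]
      constructor
      · rintro ⟨_, hu⟩
        rw [le_div_iff₀ hr0, mul_comm]
        exact hu
      · intro hu
        have h3 : t * x / r ≤ x / r := by
          apply div_le_div_of_nonneg_right ?_ hr0.le
          nlinarith
        refine ⟨le_trans hu (le_trans h3 hxr.le), ?_⟩
        rw [le_div_iff₀ hr0, mul_comm] at hu
        exact hu
    have e2 : {s : ℝ | s ≤ m ∧ x / m < r ∧ r * s ≤ x} = Iic (x / r) := by
      ext u
      simp only [mem_setOf_eq, mem_Iic, hr, true_and]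
      constructor
      · rintro ⟨_, hu⟩
        rw [le_div_iff₀ hr0, mul_comm]
        exact hu
      · intro hu
        refine ⟨le_trans hu hxr.le, ?_⟩
        rw [le_div_iff₀ hr0, mul_comm] at hu
        exact hu
    rw [e1, e2, map_Iic hS, map_Iic hS]
    have hy : 0 < x / r := div_pos hx hr0
    have := hb (x / r) hy hxr
    rw [mul_div_assoc]
    calc ENNReal.ofReal c * P {ω | S ω ≤ x / r}
        = ENNReal.ofReal (c * (P {ω | S ω ≤ x / r}).toReal) := by
          rw [ENNReal.ofReal_mul hc, ENNReal.ofReal_toReal (measure_ne_top _ _)]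
    _ ≤ ENNReal.ofReal ((P {ω | S ω ≤ t * (x / r)}).toReal) := ENNReal.ofReal_le_ofReal this
    _ = P {ω | S ω ≤ t * (x / r)} := ENNReal.ofReal_toReal (measure_ne_top _ _)
  · have e2 : {s : ℝ | s ≤ m ∧ x / m < r ∧ r * s ≤ x} = ∅ := by
      ext u; simp [hr]
    rw [e2]
    simp


lemma decom2 (hR : Measurable R) (hS : Measurable S) {W m : ℝ} :
    P {ω | R ω * S ω ≤ W}
      = P {ω | m < S ω ∧ R ω * S ω ≤ W} + P {ω | S ω ≤ m ∧ R ω * S ω ≤ W} := by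
  have hB : MeasurableSet {ω | S ω ≤ m ∧ R ω * S ω ≤ W} := by
    have : {ω | S ω ≤ m ∧ R ω * S ω ≤ W}
        = {ω | S ω ∈ Iic m} ∩ {ω | R ω * S ω ∈ Iic W} := by
      ext ω; simp [mem_Iic]
    rw [this]
    exact (hS measurableSet_Iic).inter ((hR.mul hS) measurableSet_Iic)
  have hdisj : Disjoint {ω | m < S ω ∧ R ω * S ω ≤ W} {ω | S ω ≤ m ∧ R ω * S ω ≤ W} := by
    rw [Set.disjoint_left]
    rintro ω ⟨h1, _⟩ ⟨h2, _⟩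
    exact absurd h2 (not_le.2 h1)
  rw [← measure_union hdisj hB]
  congr 1
  ext ω
  simp only [mem_setOf_eq, mem_union]
  constructor
  · intro hw
    by_cases hs : m < S ω
    · exact Or.inl ⟨hs, hw⟩
    · exact Or.inr ⟨not_lt.1 hs, hw⟩
  · rintro (⟨_, hw⟩ | ⟨_, hw⟩) <;> exact hw

lemma decom3 (hR : Measurable R) (hS : Measurable S)
    (hps : P {ω | ¬(0 < R ω ∧ 0 < S ω)} = 0) {W m : ℝ} (hm : 0 < m) (hW : 0 ≤ W) :
    P {ω | R ω * S ω ≤ W}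
      = P {ω | m < S ω ∧ R ω * S ω ≤ W}
        + P {ω | S ω ≤ m ∧ W / m < R ω ∧ R ω * S ω ≤ W}
        + P ({ω | R ω ≤ W / m} ∩ {ω | S ω ≤ m}) := by
  set A := {ω | m < S ω ∧ R ω * S ω ≤ W} with hA
  set B := {ω | S ω ≤ m ∧ W / m < R ω ∧ R ω * S ω ≤ W} with hB
  set C := {ω | R ω ≤ W / m} ∩ {ω | S ω ≤ m} with hC
  have mB : MeasurableSet B := by
    have : B = {ω | S ω ∈ Iic m} ∩ ({ω | R ω ∈ Ioi (W / m)} ∩ {ω | R ω * S ω ∈ Iic W}) := by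
      ext ω; simp [hB, mem_Iic, mem_Ioi]
    rw [this]
    exact (hS measurableSet_Iic).inter
      ((hR measurableSet_Ioi).inter ((hR.mul hS) measurableSet_Iic))
  have mC : MeasurableSet C := (hR measurableSet_Iic).inter (hS measurableSet_Iic)
  have hdAB : Disjoint A B := by
    rw [Set.disjoint_left]
    rintro ω ⟨h1, _⟩ ⟨h2, _⟩
    exact absurd h2 (not_le.2 h1)
  have hdAC : Disjoint A C := by
    rw [Set.disjoint_left]
    rintro ω ⟨h1, _⟩ ⟨_, h2⟩
    exact absurd h2 (not_le.2 h1)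
  have hdBC : Disjoint B C := by
    rw [Set.disjoint_left]
    rintro ω ⟨_, h1, _⟩ ⟨h2, _⟩
    exact absurd h2 (not_le.2 h1)
  have hcover : {ω | R ω * S ω ≤ W} ⊆ A ∪ B ∪ C := by
    intro ω hw
    by_cases hs : m < S ω
    · exact Or.inl (Or.inl ⟨hs, hw⟩)
    · by_cases hr : W / m < R ω
      · exact Or.inl (Or.inr ⟨not_lt.1 hs, hr, hw⟩)
      · exact Or.inr ⟨not_lt.1 hr, not_lt.1 hs⟩
  apply le_antisymm
  · calc P {ω | R ω * S ω ≤ W} ≤ P (A ∪ B ∪ C) := measure_mono hcover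
      _ ≤ P (A ∪ B) + P C := measure_union_le _ _
      _ ≤ P A + P B + P C := add_le_add (measure_union_le _ _) le_rfl
  · have heq : P A + P B + P C = P (A ∪ B ∪ C) := by
      rw [measure_union (Set.disjoint_union_left.mpr ⟨hdAC, hdBC⟩) mC,
        measure_union hdAB mB]
    rw [heq]
    have hcon : P ((A ∪ B ∪ C) ∩ {ω | 0 < R ω ∧ 0 < S ω}) = P (A ∪ B ∪ C) := by
      apply measure_inter_conull
      rw [compl_setOf]
      exact hps
    rw [← hcon]
    apply measure_mono
    rintro ω ⟨hU, hp1, hp2⟩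
    rcases hU with (⟨_, hw⟩ | ⟨_, _, hw⟩) | ⟨hr, hs⟩
    · exact hw
    · exact hw
    · show R ω * S ω ≤ W
      calc R ω * S ω ≤ (W / m) * m :=
            mul_le_mul hr hs hp2.le (div_nonneg hW hm.le)
      _ = W := div_mul_cancel₀ W hm.ne'


lemma toReal_le_of_le_ofReal_mul {c : ℝ} (hc : 0 ≤ c) {u v : ℝ≥0∞} (hv : v ≠ ⊤)
    (h : u ≤ ENNReal.ofReal c * v) : u.toReal ≤ c * v.toReal := by
  have h2 := ENNReal.toReal_mono (by
    exact ENNReal.mul_ne_top ENNReal.ofReal_ne_top hv) h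
  rwa [ENNReal.toReal_mul, ENNReal.toReal_ofReal hc] at h2

lemma ofReal_mul_le_toReal {c : ℝ} (hc : 0 ≤ c) {u v : ℝ≥0∞} (hu : u ≠ ⊤)
    (h : ENNReal.ofReal c * v ≤ u) : c * v.toReal ≤ u.toReal := by
  have h2 := ENNReal.toReal_mono hu h
  rwa [ENNReal.toReal_mul, ENNReal.toReal_ofReal hc] at h2

lemma negl {γ α : ℝ} (hγ : 0 < γ) (hα : 0 < α) (hγα : γ < α)
    (hR : Measurable R) (hS : Measurable S) (hind : IndepFun R S P)
    (hps : P {ω | ¬(0 < R ω ∧ 0 < S ω)} = 0)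
    (hRrv : RegVarAt0 (fun x => (P {ω | R ω ≤ x}).toReal) γ)
    (hSrv : RegVarAt0 (fun x => (P {ω | S ω ≤ x}).toReal) α)
    {θ : ℝ} (hθ1 : γ / α < θ) (hθ2 : θ < 1) {ε : ℝ} (hε : 0 < ε) :
    ∀ᶠ x in 𝓝[>] (0:ℝ),
      (P {ω | S ω ≤ x ^ θ}).toReal ≤ ε * (P {ω | R ω * S ω ≤ x}).toReal := by
  set h : ℝ → ℝ := fun y => (P {ω | R ω ≤ y}).toReal with hh
  set g : ℝ → ℝ := fun y => (P {ω | S ω ≤ y}).toReal with hgdef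
  have hmono : Monotone h := cdf_mono P R
  have gmono : Monotone g := cdf_mono P S
  have hnn : ∀ y, 0 ≤ h y := fun y => ENNReal.toReal_nonneg
  have gnn : ∀ y, 0 ≤ g y := fun y => ENNReal.toReal_nonneg
  have hθ0 : 0 < θ := lt_trans (div_pos hγ hα) hθ1
  have hγθα : γ < θ * α := by
    rw [div_lt_iff₀ hα] at hθ1
    linarith
  set δ : ℝ := (θ * α - γ) / (θ + 2) with hδ
  have hδ0 : 0 < δ := div_pos (by linarith) (by linarith)
  have hδα : δ < α := by
    rw [hδ, div_lt_iff₀ (by linarith : (0:ℝ) < θ + 2)]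
    nlinarith
  have hkey : θ * (α - δ) = (γ + δ) + δ := by
    rw [hδ]
    field_simp
    ring
  obtain ⟨C, hC, x₁, hx₁, hub⟩ := rv_poly_upper hSrv gmono gnn hδ0 hδα
  obtain ⟨c, hc, x₂, hx₂, hlb⟩ := rv_poly_lower hRrv hmono hnn hγ hδ0
  have hg1 : 0 < g 1 := rv_pos hSrv gmono gnn 1 one_pos
  set b : ℝ := ε * c * g 1 / C with hb
  have hb0 : 0 < b := by positivity
  rw [ev_iff]
  refine ⟨min (min (x₁ ^ (1/θ)) x₂) (min 1 (b ^ (1/δ))), by positivity, fun x hx hxd => ?_⟩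
  have hxθ : x ^ θ ≤ x₁ := by
    have h1 : x < x₁ ^ (1/θ) := lt_of_lt_of_le hxd (le_trans (min_le_left _ _) (min_le_left _ _))
    have h2 : x ^ θ < (x₁ ^ (1/θ)) ^ θ := Real.rpow_lt_rpow hx.le h1 hθ0
    rw [← Real.rpow_mul hx₁.le, one_div, inv_mul_cancel₀ hθ0.ne', Real.rpow_one] at h2
    exact h2.le
  have hx2 : x ≤ x₂ := le_of_lt (lt_of_lt_of_le hxd (le_trans (min_le_left _ _) (min_le_right _ _)))
  have hxδb : x ^ δ ≤ b := by
    have h1 : x < b ^ (1/δ) := lt_of_lt_of_le hxd (le_trans (min_le_right _ _) (min_le_right _ _))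
    have h2 : x ^ δ < (b ^ (1/δ)) ^ δ := Real.rpow_lt_rpow hx.le h1 hδ0
    rw [← Real.rpow_mul hb0.le, one_div, inv_mul_cancel₀ hδ0.ne', Real.rpow_one] at h2
    exact h2.le
  have hklow : h x * g 1 ≤ (P {ω | R ω * S ω ≤ x}).toReal := by
    have := lower_prod hind hps hx one_pos (by linarith [mul_one x] : x * 1 ≤ x)
    have h2 := ENNReal.toReal_mono (measure_ne_top _ _) this
    rwa [ENNReal.toReal_mul] at h2
  have hxθ0 : 0 < x ^ θ := Real.rpow_pos_of_pos hx θ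
  calc g (x ^ θ) ≤ C * (x ^ θ) ^ (α - δ) := hub _ hxθ0 hxθ
  _ = C * (x ^ (γ + δ) * x ^ δ) := by
      rw [← Real.rpow_mul hx.le, hkey, Real.rpow_add hx]
  _ ≤ C * (x ^ (γ + δ) * b) := by
      have := Real.rpow_nonneg hx.le (γ + δ)
      have h2 := mul_le_mul_of_nonneg_left hxδb this
      nlinarith [hC]
  _ = ε * (c * x ^ (γ + δ)) * g 1 := by
      rw [hb]
      field_simp
  _ ≤ ε * h x * g 1 := by
      have h3 := hlb x hx hx2
      nlinarith [mul_le_mul_of_nonneg_right (mul_le_mul_of_nonneg_left h3 hε.le) hg1.le]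
  _ ≤ ε * (P {ω | R ω * S ω ≤ x}).toReal := by
      rw [mul_assoc]
      exact mul_le_mul_of_nonneg_left hklow hε.le


lemma rpow_small {p d : ℝ} (hp : 0 < p) (hd : 0 < d) :
    ∀ᶠ x in 𝓝[>] (0:ℝ), x ^ p < d := by
  rw [ev_iff]
  refine ⟨d ^ (1/p), by positivity, fun x hx hxd => ?_⟩
  have h2 : x ^ p < (d ^ (1/p)) ^ p := Real.rpow_lt_rpow hx.le hxd hp
  rwa [← Real.rpow_mul hd.le, one_div, inv_mul_cancel₀ hp.ne', Real.rpow_one] at h2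

lemma main_bounds {γ α : ℝ} (hγ : 0 < γ) (hα : 0 < α) (hγα : γ ≤ α)
    (hR : Measurable R) (hS : Measurable S) (hind : IndepFun R S P)
    (hps : P {ω | ¬(0 < R ω ∧ 0 < S ω)} = 0)
    (hRrv : RegVarAt0 (fun x => (P {ω | R ω ≤ x}).toReal) γ)
    (hSrv : RegVarAt0 (fun x => (P {ω | S ω ≤ x}).toReal) α)
    {t ε : ℝ} (ht : 0 < t) (ht1 : t ≤ 1) (hε : 0 < ε) (hεt : ε < t ^ γ) :
    ∀ᶠ x in 𝓝[>] (0:ℝ),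
      (P {ω | R ω * S ω ≤ t * x}).toReal
          ≤ (t ^ γ + ε) * (P {ω | R ω * S ω ≤ x}).toReal
            + 2 * ε * (P {ω | R ω * S ω ≤ x}).toReal ∧
      (t ^ γ - ε) * (P {ω | R ω * S ω ≤ x}).toReal
          ≤ (P {ω | R ω * S ω ≤ t * x}).toReal
            + 2 * ε * (P {ω | R ω * S ω ≤ x}).toReal := by
  set h : ℝ → ℝ := fun y => (P {ω | R ω ≤ y}).toReal with hh
  set g : ℝ → ℝ := fun y => (P {ω | S ω ≤ y}).toReal with hgdef
  have hmono : Monotone h := cdf_mono P R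
  have gmono : Monotone g := cdf_mono P S
  have hnn : ∀ y, 0 ≤ h y := fun y => ENNReal.toReal_nonneg
  have gnn : ∀ y, 0 ≤ g y := fun y => ENNReal.toReal_nonneg
  have htγ1 : t ^ γ ≤ 1 := Real.rpow_le_one ht.le ht1 hγ.le
  have hc1 : (0:ℝ) ≤ t ^ γ + ε := by positivity
  have hc2 : (0:ℝ) ≤ t ^ γ - ε := by linarith
  obtain ⟨δh, hδh, hbh⟩ := rv_bounds hRrv hmono hnn ht hε
  rcases lt_or_eq_of_le hγα with hlt | heq
  -- CASE γ < α : use threshold x ^ θ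
  · set θ : ℝ := (γ / α + 1) / 2 with hθ
    have hθa : γ / α < θ := by
      rw [hθ]
      have : γ / α < 1 := (div_lt_one hα).2 hlt
      linarith
    have hθ2 : θ < 1 := by
      rw [hθ]
      have : γ / α < 1 := (div_lt_one hα).2 hlt
      linarith
    have hθ0 : 0 < θ := lt_trans (div_pos hγ hα) hθa
    have hnegl := negl hγ hα hlt hR hS hind hps hRrv hSrv hθa hθ2 hε
    have hsm := rpow_small (p := 1 - θ) (by linarith) hδh
    filter_upwards [hnegl, hsm, self_mem_nhdsWithin] with x hnx hsx hx
    replace hx : 0 < x := hx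
    set m : ℝ := x ^ θ with hm
    have hm0 : 0 < m := Real.rpow_pos_of_pos hx θ
    have hxm : x / m = x ^ (1 - θ) := by
      rw [hm, div_eq_iff (Real.rpow_pos_of_pos hx θ).ne', ← Real.rpow_add hx,
        show (1 - θ) + θ = 1 by ring, Real.rpow_one]
    have hbound : ∀ y, 0 < y → y < x / m →
        ((t ^ γ - ε) * h y ≤ h (t * y) ∧ h (t * y) ≤ (t ^ γ + ε) * h y) := by
      intro y hy hym
      rw [hxm] at hym
      exact hbh y hy (lt_trans hym hsx)
    have hAu := estA_upper hR hS hind ht hx hm0 hc1 (fun y hy hym => (hbound y hy hym).2)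
    have hAl := estA_lower hR hS hind ht hx hm0 hc2 (fun y hy hym => (hbound y hy hym).1)
    have hd2 := decom2 hR hS (W := t * x) (m := m) (P := P)
    have hd2' := decom2 hR hS (W := x) (m := m) (P := P)
    set A' := P {ω | m < S ω ∧ R ω * S ω ≤ t * x} with hA'
    set D' := P {ω | S ω ≤ m ∧ R ω * S ω ≤ t * x} with hD'
    set A := P {ω | m < S ω ∧ R ω * S ω ≤ x} with hA
    set D := P {ω | S ω ≤ m ∧ R ω * S ω ≤ x} with hD
    have hDm : D' ≤ P {ω | S ω ≤ m} := measure_mono (fun ω hw => hw.1)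
    have hDm2 : D ≤ P {ω | S ω ≤ m} := measure_mono (fun ω hw => hw.1)
    have hktx : (P {ω | R ω * S ω ≤ t * x}).toReal = A'.toReal + D'.toReal := by
      rw [hd2, ENNReal.toReal_add (measure_ne_top _ _) (measure_ne_top _ _)]
    have hkx : (P {ω | R ω * S ω ≤ x}).toReal = A.toReal + D.toReal := by
      rw [hd2', ENNReal.toReal_add (measure_ne_top _ _) (measure_ne_top _ _)]
    have ha'u : A'.toReal ≤ (t ^ γ + ε) * A.toReal :=
      toReal_le_of_le_ofReal_mul hc1 (measure_ne_top _ _) hAu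
    have ha'l : (t ^ γ - ε) * A.toReal ≤ A'.toReal :=
      ofReal_mul_le_toReal hc2 (measure_ne_top _ _) hAl
    have hgm : (P {ω | S ω ≤ m}).toReal ≤ ε * (P {ω | R ω * S ω ≤ x}).toReal := hnx
    have hd'u : D'.toReal ≤ ε * (P {ω | R ω * S ω ≤ x}).toReal :=
      le_trans (ENNReal.toReal_mono (measure_ne_top _ _) hDm) hgm
    have hdu : D.toReal ≤ ε * (P {ω | R ω * S ω ≤ x}).toReal :=
      le_trans (ENNReal.toReal_mono (measure_ne_top _ _) hDm2) hgm
    have hAk : A.toReal ≤ (P {ω | R ω * S ω ≤ x}).toReal := by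
      rw [hkx]
      have : (0:ℝ) ≤ D.toReal := ENNReal.toReal_nonneg
      linarith
    have hA'k : A'.toReal ≤ (P {ω | R ω * S ω ≤ t * x}).toReal := by
      rw [hktx]
      have : (0:ℝ) ≤ D'.toReal := ENNReal.toReal_nonneg
      linarith
    constructor
    · calc (P {ω | R ω * S ω ≤ t * x}).toReal = A'.toReal + D'.toReal := hktx
      _ ≤ (t ^ γ + ε) * A.toReal + ε * (P {ω | R ω * S ω ≤ x}).toReal :=
          add_le_add ha'u hd'u
      _ ≤ (t ^ γ + ε) * (P {ω | R ω * S ω ≤ x}).toReal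
            + 2 * ε * (P {ω | R ω * S ω ≤ x}).toReal := by
          have := mul_le_mul_of_nonneg_left hAk hc1
          have h0 : (0:ℝ) ≤ (P {ω | R ω * S ω ≤ x}).toReal := ENNReal.toReal_nonneg
          nlinarith
    · calc (t ^ γ - ε) * (P {ω | R ω * S ω ≤ x}).toReal
          = (t ^ γ - ε) * A.toReal + (t ^ γ - ε) * D.toReal := by rw [hkx]; ring
      _ ≤ A'.toReal + D.toReal := by
          have h2 : (t ^ γ - ε) * D.toReal ≤ D.toReal := by
            have : (0:ℝ) ≤ D.toReal := ENNReal.toReal_nonneg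
            nlinarith
          exact add_le_add ha'l h2
      _ ≤ (P {ω | R ω * S ω ≤ t * x}).toReal
            + 2 * ε * (P {ω | R ω * S ω ≤ x}).toReal := by
          have h0 : (0:ℝ) ≤ (P {ω | R ω * S ω ≤ x}).toReal := ENNReal.toReal_nonneg
          nlinarith [hA'k, hdu]
  -- CASE γ = α : use threshold √x and the three-part decomposition
  · subst heq
    obtain ⟨δg, hδg, hbg⟩ := rv_bounds hSrv gmono gnn ht hε
    have hlemA := lemA hγ le_rfl hR hS hind hps hRrv hSrv
      (C := 1 / ε) (by positivity)
    have hsm1 : ∀ᶠ x in 𝓝[>] (0:ℝ), Real.sqrt x < δh := by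
      rw [ev_iff]
      exact ⟨δh ^ 2, by positivity, fun x hx hxd => (Real.sqrt_lt' hδh).2 hxd⟩
    have hsm2 : ∀ᶠ x in 𝓝[>] (0:ℝ), Real.sqrt x < δg := by
      rw [ev_iff]
      exact ⟨δg ^ 2, by positivity, fun x hx hxd => (Real.sqrt_lt' hδg).2 hxd⟩
    filter_upwards [hlemA, hsm1, hsm2, self_mem_nhdsWithin] with x hla hs1 hs2 hx
    replace hx : 0 < x := hx
    set m : ℝ := Real.sqrt x with hm
    have hm0 : 0 < m := Real.sqrt_pos.2 hx
    have hxm : x / m = m := Real.div_sqrt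
    have hboundh : ∀ y, 0 < y → y < x / m →
        ((t ^ γ - ε) * h y ≤ h (t * y) ∧ h (t * y) ≤ (t ^ γ + ε) * h y) := by
      intro y hy hym
      rw [hxm] at hym
      exact hbh y hy (lt_trans hym hs1)
    have hboundg : ∀ y, 0 < y → y < m →
        ((t ^ γ - ε) * g y ≤ g (t * y) ∧ g (t * y) ≤ (t ^ γ + ε) * g y) := by
      intro y hy hym
      exact hbg y hy (lt_trans hym hs2)
    have hAu := estA_upper hR hS hind ht hx hm0 hc1 (fun y hy hym => (hboundh y hy hym).2)
    have hAl := estA_lower hR hS hind ht hx hm0 hc2 (fun y hy hym => (hboundh y hy hym).1)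
    have hBu := estB_upper hR hS hind ht ht1 hx hm0 hc1 (fun y hy hym => (hboundg y hy hym).2)
    have hBl := estB_lower hR hS hind ht ht1 hx hm0 hc2 (fun y hy hym => (hboundg y hy hym).1)
    have hd3 := decom3 hR hS hps (W := t * x) (m := m) hm0 (by positivity)
    have hd3' := decom3 hR hS hps (W := x) (m := m) hm0 hx.le
    set A' := P {ω | m < S ω ∧ R ω * S ω ≤ t * x} with hA'
    set B' := P {ω | S ω ≤ m ∧ t * x / m < R ω ∧ R ω * S ω ≤ t * x} with hB'
    set C' := P ({ω | R ω ≤ t * x / m} ∩ {ω | S ω ≤ m}) with hC'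
    set A := P {ω | m < S ω ∧ R ω * S ω ≤ x} with hA
    set B := P {ω | S ω ≤ m ∧ x / m < R ω ∧ R ω * S ω ≤ x} with hB
    set Cm := P ({ω | R ω ≤ x / m} ∩ {ω | S ω ≤ m}) with hCm
    -- real versions of the decompositions
    have hktx : (P {ω | R ω * S ω ≤ t * x}).toReal = A'.toReal + B'.toReal + C'.toReal := by
      rw [hd3, ENNReal.toReal_add (by finiteness) (measure_ne_top _ _),
        ENNReal.toReal_add (measure_ne_top _ _) (measure_ne_top _ _)]
    have hkx : (P {ω | R ω * S ω ≤ x}).toReal = A.toReal + B.toReal + Cm.toReal := by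
      rw [hd3', ENNReal.toReal_add (by finiteness) (measure_ne_top _ _),
        ENNReal.toReal_add (measure_ne_top _ _) (measure_ne_top _ _)]
    -- the product term
    have hCval : Cm.toReal = h m * g m := by
      rw [hCm]
      show (P ({ω | R ω ∈ Iic (x / m)} ∩ {ω | S ω ∈ Iic m})).toReal = h m * g m
      rw [indep_meas hind measurableSet_Iic measurableSet_Iic, ENNReal.toReal_mul]
      show h (x / m) * g m = h m * g m
      rw [hxm]
    have hC'le : C'.toReal ≤ h m * g m := by
      rw [← hCval]
      apply ENNReal.toReal_mono (measure_ne_top _ _)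
      apply measure_mono
      apply Set.inter_subset_inter_left
      intro ω hw
      show R ω ≤ x / m
      refine le_trans hw ?_
      apply div_le_div_of_nonneg_right ?_ hm0.le
      nlinarith
    have hprod : h m * g m ≤ ε * (P {ω | R ω * S ω ≤ x}).toReal := by
      have h2 : 1 / ε * (h m * g m) ≤ (P {ω | R ω * S ω ≤ x}).toReal := hla
      have h3 := mul_le_mul_of_nonneg_left h2 hε.le
      rw [← mul_assoc, mul_one_div, div_self hε.ne', one_mul] at h3
      exact h3
    -- convert the A and B estimates to reals
    have ha'u : A'.toReal ≤ (t ^ γ + ε) * A.toReal :=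
      toReal_le_of_le_ofReal_mul hc1 (measure_ne_top _ _) hAu
    have ha'l : (t ^ γ - ε) * A.toReal ≤ A'.toReal :=
      ofReal_mul_le_toReal hc2 (measure_ne_top _ _) hAl
    have hb'u : B'.toReal ≤ (t ^ γ + ε) * B.toReal + h m * g m := by
      have h2 := ENNReal.toReal_mono (by finiteness) hBu
      rw [ENNReal.toReal_add (by finiteness) (by finiteness), ENNReal.toReal_mul,
        ENNReal.toReal_mul, ENNReal.toReal_ofReal hc1] at h2
      calc B'.toReal ≤ (t ^ γ + ε) * B.toReal
            + (P {ω | R ω ≤ x / m}).toReal * (P {ω | S ω ≤ m}).toReal := h2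
      _ = (t ^ γ + ε) * B.toReal + h (x / m) * g m := rfl
      _ = (t ^ γ + ε) * B.toReal + h m * g m := by rw [hxm]
    have hb'l : (t ^ γ - ε) * B.toReal ≤ B'.toReal :=
      ofReal_mul_le_toReal hc2 (measure_ne_top _ _) hBl
    have habk : A.toReal + B.toReal ≤ (P {ω | R ω * S ω ≤ x}).toReal := by
      rw [hkx]
      have : (0:ℝ) ≤ Cm.toReal := ENNReal.toReal_nonneg
      linarith
    have hab'k : A'.toReal + B'.toReal ≤ (P {ω | R ω * S ω ≤ t * x}).toReal := by
      rw [hktx]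
      have : (0:ℝ) ≤ C'.toReal := ENNReal.toReal_nonneg
      linarith
    have h0 : (0:ℝ) ≤ (P {ω | R ω * S ω ≤ x}).toReal := ENNReal.toReal_nonneg
    have hA0 : (0:ℝ) ≤ A.toReal := ENNReal.toReal_nonneg
    have hB0 : (0:ℝ) ≤ B.toReal := ENNReal.toReal_nonneg
    constructor
    · calc (P {ω | R ω * S ω ≤ t * x}).toReal
          = A'.toReal + B'.toReal + C'.toReal := hktx
      _ ≤ (t ^ γ + ε) * (A.toReal + B.toReal) + 2 * (h m * g m) := by
          nlinarith [ha'u, hb'u, hC'le]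
      _ ≤ (t ^ γ + ε) * (P {ω | R ω * S ω ≤ x}).toReal
            + 2 * ε * (P {ω | R ω * S ω ≤ x}).toReal := by
          nlinarith [mul_le_mul_of_nonneg_left habk hc1, hprod]
    · calc (t ^ γ - ε) * (P {ω | R ω * S ω ≤ x}).toReal
          = (t ^ γ - ε) * (A.toReal + B.toReal) + (t ^ γ - ε) * Cm.toReal := by
            rw [hkx]; ring
      _ ≤ (A'.toReal + B'.toReal) + Cm.toReal := by
          have h2 : (t ^ γ - ε) * Cm.toReal ≤ Cm.toReal := by
            have : (0:ℝ) ≤ Cm.toReal := ENNReal.toReal_nonneg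
            nlinarith
          have h3 : (t ^ γ - ε) * (A.toReal + B.toReal) ≤ A'.toReal + B'.toReal := by
            calc (t ^ γ - ε) * (A.toReal + B.toReal)
                = (t ^ γ - ε) * A.toReal + (t ^ γ - ε) * B.toReal := by ring
            _ ≤ A'.toReal + B'.toReal := add_le_add ha'l hb'l
          linarith
      _ ≤ (P {ω | R ω * S ω ≤ t * x}).toReal
            + 2 * ε * (P {ω | R ω * S ω ≤ x}).toReal := by
          rw [hCval]
          nlinarith [hab'k, hprod]


lemma k_pos {γ α : ℝ} (hγ : 0 < γ) (hα : 0 < α)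
    (hind : IndepFun R S P) (hps : P {ω | ¬(0 < R ω ∧ 0 < S ω)} = 0)
    (hRrv : RegVarAt0 (fun x => (P {ω | R ω ≤ x}).toReal) γ)
    (hSrv : RegVarAt0 (fun x => (P {ω | S ω ≤ x}).toReal) α) :
    ∀ x, 0 < x → 0 < (P {ω | R ω * S ω ≤ x}).toReal := by
  intro x hx
  have hsx : 0 < Real.sqrt x := Real.sqrt_pos.2 hx
  have hhp := rv_pos hRrv (cdf_mono P R) (fun _ => ENNReal.toReal_nonneg) _ hsx
  have hgp := rv_pos hSrv (cdf_mono P S) (fun _ => ENNReal.toReal_nonneg) _ hsx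
  have hl := lower_prod hind hps hsx hsx (le_of_eq (Real.mul_self_sqrt hx.le))
  have h2 := ENNReal.toReal_mono (measure_ne_top _ _) hl
  rw [ENNReal.toReal_mul] at h2
  exact lt_of_lt_of_le (mul_pos hhp hgp) h2

lemma tendsto_le_one {γ α : ℝ} (hγ : 0 < γ) (hα : 0 < α) (hγα : γ ≤ α)
    (hR : Measurable R) (hS : Measurable S) (hind : IndepFun R S P)
    (hps : P {ω | ¬(0 < R ω ∧ 0 < S ω)} = 0)
    (hRrv : RegVarAt0 (fun x => (P {ω | R ω ≤ x}).toReal) γ)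
    (hSrv : RegVarAt0 (fun x => (P {ω | S ω ≤ x}).toReal) α)
    {t : ℝ} (ht : 0 < t) (ht1 : t ≤ 1) :
    Filter.Tendsto
      (fun x => (P {ω | R ω * S ω ≤ t * x}).toReal / (P {ω | R ω * S ω ≤ x}).toReal)
      (𝓝[>] (0:ℝ)) (𝓝 (t ^ γ)) := by
  have hkp := k_pos hγ hα hind hps hRrv hSrv
  rw [Metric.tendsto_nhds]
  intro ε hε
  set ε₁ : ℝ := min (ε / 4) (t ^ γ / 2) with hε₁def
  have htγ : 0 < t ^ γ := Real.rpow_pos_of_pos ht γ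
  have hε₁ : 0 < ε₁ := lt_min (by linarith) (by linarith)
  have hε₁t : ε₁ < t ^ γ := lt_of_le_of_lt (min_le_right _ _) (by linarith)
  have hε₁e : ε₁ ≤ ε / 4 := min_le_left _ _
  filter_upwards [main_bounds hγ hα hγα hR hS hind hps hRrv hSrv ht ht1 hε₁ hε₁t,
    self_mem_nhdsWithin] with x hb hx
  replace hx : 0 < x := hx
  set kx := (P {ω | R ω * S ω ≤ x}).toReal with hkx
  set ktx := (P {ω | R ω * S ω ≤ t * x}).toReal with hktx
  have hkxp : 0 < kx := hkp x hx
  have hub : ktx / kx ≤ t ^ γ + 3 * ε₁ := by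
    rw [div_le_iff₀ hkxp]
    have := hb.1
    nlinarith
  have hlb : t ^ γ - 3 * ε₁ ≤ ktx / kx := by
    rw [le_div_iff₀ hkxp]
    have := hb.2
    nlinarith
  rw [Real.dist_eq, abs_lt]
  constructor <;> nlinarith

lemma aux_rv {γ α : ℝ} (hγ : 0 < γ) (hα : 0 < α) (hγα : γ ≤ α)
    (hR : Measurable R) (hS : Measurable S) (hind : IndepFun R S P)
    (hps : P {ω | ¬(0 < R ω ∧ 0 < S ω)} = 0)
    (hRrv : RegVarAt0 (fun x => (P {ω | R ω ≤ x}).toReal) γ)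
    (hSrv : RegVarAt0 (fun x => (P {ω | S ω ≤ x}).toReal) α) :
    RegVarAt0 (fun x => (P {ω | R ω * S ω ≤ x}).toReal) γ := by
  intro t ht
  rcases le_or_gt t 1 with ht1 | ht1
  · exact tendsto_le_one hγ hα hγα hR hS hind hps hRrv hSrv ht ht1
  · -- invert : use the result for t⁻¹
    have hu : 0 < t⁻¹ := by positivity
    have hu1 : t⁻¹ ≤ 1 := by
      rw [inv_le_one_iff₀]
      right; exact ht1.le
    have hbase := tendsto_le_one hγ hα hγα hR hS hind hps hRrv hSrv hu hu1
    have hmap : Filter.Tendsto (fun x : ℝ => t * x) (𝓝[>] (0:ℝ)) (𝓝[>] (0:ℝ)) := by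
      rw [tendsto_nhdsWithin_iff]
      constructor
      · have : Filter.Tendsto (fun x : ℝ => t * x) (𝓝 (0:ℝ)) (𝓝 (t * 0)) :=
          (continuous_const.mul continuous_id).tendsto 0
        rw [mul_zero] at this
        exact this.mono_left nhdsWithin_le_nhds
      · filter_upwards [self_mem_nhdsWithin] with x hx
        exact mul_pos ht hx
    have hcomp := hbase.comp hmap
    have heq : (fun x : ℝ => (P {ω | R ω * S ω ≤ t⁻¹ * (t * x)}).toReal
        / (P {ω | R ω * S ω ≤ t * x}).toReal)
        = fun x : ℝ => (P {ω | R ω * S ω ≤ x}).toReal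
            / (P {ω | R ω * S ω ≤ t * x}).toReal := by
      funext x
      rw [inv_mul_cancel_left₀ ht.ne']
    rw [show (fun x : ℝ => (P {ω | R ω * S ω ≤ t⁻¹ * x}).toReal
        / (P {ω | R ω * S ω ≤ x}).toReal) ∘ (fun x : ℝ => t * x)
        = fun x : ℝ => (P {ω | R ω * S ω ≤ t⁻¹ * (t * x)}).toReal
            / (P {ω | R ω * S ω ≤ t * x}).toReal from rfl, heq] at hcomp
    have hinv := hcomp.inv₀ (by
      have : (0:ℝ) < t⁻¹ ^ γ := Real.rpow_pos_of_pos hu γ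
      exact this.ne')
    have heq2 : (fun x : ℝ => ((P {ω | R ω * S ω ≤ x}).toReal
        / (P {ω | R ω * S ω ≤ t * x}).toReal)⁻¹)
        = fun x : ℝ => (P {ω | R ω * S ω ≤ t * x}).toReal
            / (P {ω | R ω * S ω ≤ x}).toReal := by
      funext x
      rw [inv_div]
    rw [heq2] at hinv
    have heq3 : (t⁻¹ ^ γ)⁻¹ = t ^ γ := by
      rw [Real.inv_rpow ht.le, inv_inv]
    rwa [heq3] at hinv

end Main

theorem product_regular_variation_at_zero
    {Ω : Type*} [MeasurableSpace Ω] (P : Measure Ω) [IsProbabilityMeasure P]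
    (γ α : ℝ) (hγ : 0 < γ) (hα : 0 < α)
    (R S : Ω → ℝ) (hR : Measurable R) (hS : Measurable S)
    (hRpos : ∀ᵐ ω ∂P, 0 < R ω) (hSpos : ∀ᵐ ω ∂P, 0 < S ω)
    (hind : IndepFun R S P)
    (hRrv : RegVarAt0 (fun x => (P {ω | R ω ≤ x}).toReal) γ)
    (hSrv : RegVarAt0 (fun x => (P {ω | S ω ≤ x}).toReal) α) :
    RegVarAt0 (fun x => (P {ω | R ω * S ω ≤ x}).toReal) (min γ α) := by
  have hps : P {ω | ¬(0 < R ω ∧ 0 < S ω)} = 0 := by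
    have := hRpos.and hSpos
    rw [MeasureTheory.ae_iff] at this
    exact this
  have hps' : P {ω | ¬(0 < S ω ∧ 0 < R ω)} = 0 := by
    have := hSpos.and hRpos
    rw [MeasureTheory.ae_iff] at this
    exact this
  rcases le_total γ α with hle | hle
  · rw [min_eq_left hle]
    exact aux_rv hγ hα hle hR hS hind hps hRrv hSrv
  · rw [min_eq_right hle]
    have hsets : (fun x => (P {ω | S ω * R ω ≤ x}).toReal)
        = fun x => (P {ω | R ω * S ω ≤ x}).toReal := by
      funext x
      have hseteq : {ω | S ω * R ω ≤ x} = {ω | R ω * S ω ≤ x} := by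
        ext ω
        simp [mul_comm]
      rw [hseteq]
    have := aux_rv hα hγ hle hS hR hind.symm hps' hSrv hRrv
    rwa [hsets] at this
end

section
/- Let R ~ H with H(0)=0 be regularly varying at 0 with index γ ∈ (0, α+β'). Then for λ = α+β'+1 and δ ∈ (0,1], the Weyl integral satisfies Γ(δ)(I_δ p_{-λ} H)(x) ~ x^{δ-λ} H(x) · B(δ, λ−δ−γ) as x ↓ 0, where B is the Beta function; explicitly ∫_x^∞ (y−x)^{δ−1} y^{−λ} H(y) dy ~ x^{δ−λ} H(x) ∫_1^∞ (y−1)^{δ−1} y^{−λ+γ} dy = x^{δ−λ} H(x) Γ(δ)Γ(λ−δ−γ)/Γ(λ−γ). -/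
open MeasureTheory ProbabilityTheory Real Filter Topology Set
open scoped ENNReal

lemma real_beta {a b : ℝ} (ha : 0 < a) (hb : 0 < b) :
    ∫ t in Ioo (0:ℝ) 1, t ^ (a-1) * (1-t) ^ (b-1) = Gamma a * Gamma b / Gamma (a+b) := by
  have key := Complex.Gamma_mul_Gamma_eq_betaIntegral
    (s := (a:ℂ)) (t := (b:ℂ)) (by simpa using ha) (by simpa using hb)
  have hbeta : Complex.betaIntegral a b
      = ((∫ t in (0:ℝ)..1, t ^ (a-1) * (1-t) ^ (b-1) : ℝ) : ℂ) := by
    rw [Complex.betaIntegral, ← intervalIntegral.integral_ofReal]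
    apply intervalIntegral.integral_congr
    intro t ht
    rw [uIcc_of_le zero_le_one] at ht
    simp only []
    rw [Complex.ofReal_mul, Complex.ofReal_cpow ht.1,
      Complex.ofReal_cpow (by linarith [ht.2] : (0:ℝ) ≤ 1 - t)]
    push_cast
    ring
  have hGpos := Real.Gamma_pos_of_pos (add_pos ha hb)
  have hreal : Gamma a * Gamma b = Gamma (a+b) * ∫ t in (0:ℝ)..1, t ^ (a-1) * (1-t) ^ (b-1) := by
    rw [hbeta] at key
    have h2 : ((Gamma a * Gamma b : ℝ) : ℂ)
        = ((Gamma (a+b) * ∫ t in (0:ℝ)..1, t ^ (a-1) * (1-t) ^ (b-1) : ℝ) : ℂ) := by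
      push_cast
      rw [← Complex.Gamma_ofReal, ← Complex.Gamma_ofReal, ← Complex.Gamma_ofReal]
      push_cast
      exact key
    exact_mod_cast h2
  rw [← integral_Ioc_eq_integral_Ioo, ← intervalIntegral.integral_of_le zero_le_one, hreal]
  field_simp


lemma beta_Ioi {a b : ℝ} (ha : 0 < a) (hb : 0 < b) :
    ∫ u in Ioi (1:ℝ), (u-1) ^ (b-1) * u ^ (-(a+b)) = Gamma a * Gamma b / Gamma (a+b) := by
  have himg : (fun u : ℝ => u⁻¹) '' (Ioi 1) = Ioo 0 1 := by
    ext t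
    constructor
    · rintro ⟨u, hu, rfl⟩
      exact ⟨inv_pos.2 (lt_trans one_pos hu), inv_lt_one_of_one_lt₀ hu⟩
    · rintro ⟨h0, h1⟩
      exact ⟨t⁻¹, (one_lt_inv_iff₀).2 ⟨h0, h1⟩, inv_inv t⟩
  have hderiv : ∀ u ∈ Ioi (1:ℝ), HasDerivWithinAt (fun u : ℝ => u⁻¹) (-(u^2)⁻¹) (Ioi 1) u :=
    fun u hu => (hasDerivAt_inv (ne_of_gt (lt_trans one_pos hu))).hasDerivWithinAt
  have hinj : InjOn (fun u : ℝ => u⁻¹) (Ioi 1) := fun u _ v _ h => inv_injective h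
  have key := integral_image_eq_integral_abs_deriv_smul measurableSet_Ioi hderiv hinj
    (fun t => t ^ (a-1) * (1-t) ^ (b-1))
  rw [himg, real_beta ha hb] at key
  rw [key]
  apply setIntegral_congr_fun measurableSet_Ioi
  intro u hu
  have hu1 : (1:ℝ) < u := hu
  have hu0 : (0:ℝ) < u := lt_trans one_pos hu1
  have h1 : |(-(u^2)⁻¹)| = u ^ (-2 : ℝ) := by
    rw [abs_neg, abs_inv, abs_of_pos (by positivity), ← Real.rpow_natCast u 2,
      ← Real.rpow_neg hu0.le]
    norm_num
  have h2 : (u⁻¹ : ℝ) ^ (a-1) = u ^ (1-a) := by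
    rw [← Real.rpow_neg_one u, ← Real.rpow_mul hu0.le]
    congr 1; ring
  have h3 : ((1:ℝ) - u⁻¹) ^ (b-1) = (u-1) ^ (b-1) * u ^ (1-b) := by
    have : (1:ℝ) - u⁻¹ = (u-1) * u⁻¹ := by field_simp
    rw [this, Real.mul_rpow (by linarith) (by positivity), ← Real.rpow_neg_one u,
      ← Real.rpow_mul hu0.le]
    congr 2; ring
  simp only [smul_eq_mul]
  rw [h1, h2, h3]
  rw [show (u:ℝ) ^ (-(a+b)) = u ^ (-2:ℝ) * (u ^ (1-a) * u ^ (1-b)) by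
    rw [← Real.rpow_add hu0, ← Real.rpow_add hu0]; ring_nf]
  ring

lemma integrable_aux {b s : ℝ} (hb : 0 < b) (hb1 : b ≤ 1) (hbs : b < s) :
    IntegrableOn (fun u : ℝ => (u-1) ^ (b-1) * u ^ (-s)) (Ioi (1:ℝ)) := by
  have hsplit : Ioc (1:ℝ) 2 ∪ Ioi 2 = Ioi 1 := Ioc_union_Ioi_eq_Ioi one_le_two
  rw [← hsplit]
  apply IntegrableOn.union
  · -- on Ioc 1 2, dominate by (u-1)^(b-1)
    have hi : IntegrableOn (fun u : ℝ => (u-1) ^ (b-1)) (Ioc 1 2) := by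
      have h0 : IntervalIntegrable (fun x : ℝ => x ^ (b-1)) volume 0 1 :=
        intervalIntegral.intervalIntegrable_rpow' (by linarith)
      have h1 : IntervalIntegrable (fun x : ℝ => (x-1) ^ (b-1)) volume 1 2 := by
        have := h0.comp_sub_right 1
        norm_num at this
        exact this
      rw [intervalIntegrable_iff_integrableOn_Ioc_of_le one_le_two] at h1
      exact h1
    apply Integrable.mono hi
    · apply (ContinuousOn.aestronglyMeasurable ?_ measurableSet_Ioc)
      intro u hu
      apply ContinuousWithinAt.mul
      · exact (ContinuousWithinAt.rpow_const (continuousWithinAt_id.sub continuousWithinAt_const)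
          (Or.inl (sub_ne_zero.mpr (by have := hu.1; exact ne_of_gt this))))
      · exact (ContinuousWithinAt.rpow_const continuousWithinAt_id
          (Or.inl (by have := hu.1; positivity)))
    · filter_upwards [ae_restrict_mem measurableSet_Ioc] with u hu
      have h1u : (1:ℝ) < u := hu.1
      have e1 : ‖(u-1) ^ (b-1) * u ^ (-s)‖ = (u-1) ^ (b-1) * u ^ (-s) :=
        norm_of_nonneg (mul_nonneg (rpow_nonneg (by linarith) _) (rpow_nonneg (by linarith) _))
      have e2 : ‖(u-1) ^ (b-1)‖ = (u-1) ^ (b-1) := norm_of_nonneg (rpow_nonneg (by linarith) _)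
      rw [e1, e2]
      have h2 : u ^ (-s) ≤ 1 :=
        Real.rpow_le_one_of_one_le_of_nonpos h1u.le (by linarith)
      nlinarith [Real.rpow_nonneg (show (0:ℝ) ≤ u - 1 by linarith) (b-1),
        Real.rpow_nonneg (show (0:ℝ) ≤ u by linarith) (-s)]
  · -- on Ioi 2, dominate by 2^(1-b) * u^(b-1-s)
    have hi : IntegrableOn (fun u : ℝ => 2 ^ (1-b) * u ^ (b-1-s)) (Ioi (2:ℝ)) :=
      (integrableOn_Ioi_rpow_of_lt (by linarith) two_pos).const_mul _
    apply Integrable.mono hi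
    · apply (ContinuousOn.aestronglyMeasurable ?_ measurableSet_Ioi)
      intro u hu
      have h2u : (2:ℝ) < u := hu
      apply ContinuousWithinAt.mul
      · exact (ContinuousWithinAt.rpow_const (continuousWithinAt_id.sub continuousWithinAt_const)
          (Or.inl (sub_ne_zero.mpr (by intro h; rw [h] at h2u; norm_num at h2u))))
      · exact (ContinuousWithinAt.rpow_const continuousWithinAt_id
          (Or.inl (by intro h; rw [h] at h2u; norm_num at h2u)))
    · filter_upwards [ae_restrict_mem measurableSet_Ioi] with u hu
      have h2u : (2:ℝ) < u := hu
      have hu0 : (0:ℝ) < u := by linarith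
      have e1 : ‖(u-1) ^ (b-1) * u ^ (-s)‖ = (u-1) ^ (b-1) * u ^ (-s) :=
        norm_of_nonneg (mul_nonneg (rpow_nonneg (by linarith) _) (rpow_nonneg hu0.le _))
      have e2 : ‖2 ^ (1-b) * u ^ (b-1-s)‖ = 2 ^ (1-b) * u ^ (b-1-s) :=
        norm_of_nonneg (by positivity)
      rw [e1, e2]
      have key : (u-1) ^ (b-1) ≤ 2 ^ (1-b) * u ^ (b-1) := by
        have h1 : (u-1) ^ (b-1) ≤ (u/2) ^ (b-1) := by
          apply Real.rpow_le_rpow_of_nonpos (by linarith) (by linarith) (by linarith)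
        calc (u-1) ^ (b-1) ≤ (u/2) ^ (b-1) := h1
          _ = 2 ^ (1-b) * u ^ (b-1) := by
            rw [div_eq_mul_inv, Real.mul_rpow hu0.le (by positivity),
              ← Real.rpow_neg_one (2:ℝ), ← Real.rpow_mul (by norm_num)]
            ring_nf
      calc (u-1) ^ (b-1) * u ^ (-s) ≤ (2 ^ (1-b) * u ^ (b-1)) * u ^ (-s) := by
            apply mul_le_mul_of_nonneg_right key (rpow_nonneg hu0.le _)
        _ = 2 ^ (1-b) * u ^ (b-1-s) := by
            rw [mul_assoc, ← Real.rpow_add hu0]; ring_nf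


lemma eventually_Ioo {P : ℝ → Prop} (h : ∀ᶠ x in nhdsWithin 0 (Set.Ioi 0), P x) :
    ∃ x1 : ℝ, 0 < x1 ∧ ∀ x : ℝ, 0 < x → x < x1 → P x := by
  rw [eventually_iff, Metric.mem_nhdsWithin_iff] at h
  obtain ⟨ε, hε, hsub⟩ := h
  refine ⟨ε, hε, fun x h0 hx => hsub ⟨?_, h0⟩⟩
  simp only [Metric.mem_ball, Real.dist_eq, sub_zero, abs_of_pos h0]
  exact hx

lemma H_pos {H : ℝ → ℝ} {γ : ℝ} (hγ : 0 < γ) (hmono : Monotone H)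
    (hH0 : ∀ x ≤ (0 : ℝ), H x = 0) (hHrv : RegVarAt0 H γ) :
    ∀ x : ℝ, 0 < x → 0 < H x := by
  have hnn : ∀ x : ℝ, 0 ≤ H x := by
    intro x
    rcases le_or_gt x 0 with h | h
    · rw [hH0 x h]
    · rw [← hH0 0 le_rfl]; exact hmono h.le
  by_contra hc
  push_neg at hc
  obtain ⟨x0, hx0, hle⟩ := hc
  have hzero : ∀ y : ℝ, y ≤ x0 → H y = 0 := by
    intro y hy
    have h1 : H y ≤ H x0 := hmono hy
    have := hnn y
    linarith
  have h2 := hHrv 2 two_pos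
  have hev : ∀ᶠ x in nhdsWithin 0 (Set.Ioi 0), H (2 * x) / H x = 0 := by
    have hmem : Set.Iio (x0/2) ∈ nhdsWithin (0:ℝ) (Set.Ioi 0) :=
      nhdsWithin_le_nhds (Iio_mem_nhds (by positivity))
    filter_upwards [hmem] with x hx
    rw [hzero (2*x) (by have := mem_Iio.mp hx; linarith), zero_div]
  have := tendsto_nhds_unique (h2.congr' hev) tendsto_const_nhds
  have h3 : (0:ℝ) < (2:ℝ) ^ γ := Real.rpow_pos_of_pos two_pos γ
  rw [this] at h3
  exact lt_irrefl 0 h3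

lemma potter {H : ℝ → ℝ} {γ ε : ℝ} (hγ : 0 < γ) (hε : 0 < ε)
    (hmono : Monotone H) (hpos : ∀ x : ℝ, 0 < x → 0 < H x) (hle1 : ∀ x : ℝ, H x ≤ 1)
    (hHrv : RegVarAt0 H γ) :
    ∃ C : ℝ, 0 < C ∧ ∃ x0 : ℝ, 0 < x0 ∧
      ∀ x : ℝ, 0 < x → x ≤ x0 → ∀ u : ℝ, 1 ≤ u → H (x * u) ≤ C * u ^ (γ + ε) * H x := by
  set T : ℝ := 2 ^ (1/ε) with hT
  have hT1 : 1 < T := Real.one_lt_rpow_iff_of_pos two_pos |>.2 (Or.inl ⟨one_lt_two, by positivity⟩)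
  have hT0 : 0 < T := lt_trans one_pos hT1
  have hTε : T ^ ε = 2 := by
    rw [hT, ← Real.rpow_mul (by norm_num), one_div, inv_mul_cancel₀ hε.ne', Real.rpow_one]
  set K : ℝ := T ^ (γ + ε) with hKdef
  have hKeq : K = 2 * T ^ γ := by
    rw [hKdef, Real.rpow_add hT0, hTε]; ring
  have hK1 : 1 < K := Real.one_lt_rpow_iff_of_pos hT0 |>.2 (Or.inl ⟨hT1, by linarith⟩)
  have hK0 : 0 < K := lt_trans one_pos hK1
  -- the basic step: H (T * x) ≤ K * H x for small x
  obtain ⟨x1, hx1, hstep⟩ : ∃ x1 : ℝ, 0 < x1 ∧ ∀ x : ℝ, 0 < x → x < x1 → H (T * x) ≤ K * H x := by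
    have hTγ : (0:ℝ) < T ^ γ := Real.rpow_pos_of_pos hT0 γ
    have hev := (hHrv T hT0).eventually (Metric.ball_mem_nhds (T ^ γ) hTγ)
    obtain ⟨x1, hx1, hx1p⟩ := eventually_Ioo hev
    refine ⟨x1, hx1, fun x h0 hx => ?_⟩
    have h2 := hx1p x h0 hx
    rw [Real.dist_eq] at h2
    have h3 : H (T * x) / H x < 2 * T ^ γ := by
      have := abs_lt.mp h2
      linarith [this.2]
    rw [hKeq]
    exact le_of_lt ((div_lt_iff₀ (hpos x h0)).mp h3)
  -- iterated step
  have claimA : ∀ n : ℕ, ∀ x : ℝ, 0 < x → x * T ^ (n:ℕ) ≤ x1 → H (x * T ^ (n:ℕ)) ≤ K ^ (n:ℕ) * H x := by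
    intro n
    induction n with
    | zero => intro x h0 _; simp
    | succ n ih =>
      intro x h0 hle
      have hTn : (0:ℝ) < T ^ (n:ℕ) := pow_pos hT0 n
      have h1 : x * T ^ (n:ℕ) < x1 := by
        have : x * T ^ ((n:ℕ)+1) = (x * T ^ (n:ℕ)) * T := by ring
        rw [this] at hle
        nlinarith
      have h2 : H (x * T ^ ((n:ℕ)+1)) = H (T * (x * T ^ (n:ℕ))) := by ring_nf
      rw [h2]
      calc H (T * (x * T ^ (n:ℕ))) ≤ K * H (x * T ^ (n:ℕ)) :=
            hstep _ (by positivity) h1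
        _ ≤ K * (K ^ (n:ℕ) * H x) := by
            have := ih x h0 h1.le
            nlinarith
        _ = K ^ ((n:ℕ)+1) * H x := by ring
  -- power lower bound for H
  set x2 : ℝ := x1 / 2 with hx2def
  have hx2 : 0 < x2 := by positivity
  have hx2H : 0 < H x2 := hpos x2 hx2
  set c : ℝ := H x2 * (T * x2) ^ (-(γ + ε)) with hcdef
  have hc0 : 0 < c := by
    apply mul_pos hx2H (Real.rpow_pos_of_pos (by positivity) _)
  have hlow : ∀ x : ℝ, 0 < x → x ≤ x2 → c * x ^ (γ + ε) ≤ H x := by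
    intro x h0 hx
    set n : ℕ := ⌈Real.logb T (x2 / x)⌉₊ with hndef
    have hx2x : 1 ≤ x2 / x := (one_le_div h0).2 hx
    have hlogb0 : 0 ≤ Real.logb T (x2 / x) := Real.logb_nonneg hT1 hx2x
    have hTlogb : T ^ Real.logb T (x2 / x) = x2 / x :=
      Real.rpow_logb hT0 (ne_of_gt hT1) (by positivity)
    have hnge : x2 / x ≤ T ^ (n:ℕ) := by
      rw [← Real.rpow_natCast T n, ← hTlogb]
      exact Real.rpow_le_rpow_of_exponent_le hT1.le (Nat.le_ceil _)
    have hnlt : (n:ℝ) < Real.logb T (x2 / x) + 1 := Nat.ceil_lt_add_one hlogb0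
    -- claim A applied at y = x2 / T^n
    set y : ℝ := x2 / T ^ (n:ℕ) with hydef
    have hy0 : 0 < y := by positivity
    have hyx : y ≤ x := by
      rw [hydef, div_le_iff₀ (by positivity)]
      calc x2 ≤ x * (x2 / x) := by field_simp; exact le_rfl
        _ ≤ x * T ^ (n:ℕ) := by nlinarith
    have hyT : y * T ^ (n:ℕ) = x2 := by
      rw [hydef]; field_simp
    have hA := claimA n y hy0 (by rw [hyT]; linarith)
    rw [hyT] at hA
    -- so H y ≥ H x2 / K^n
    have hKn0 : (0:ℝ) < K ^ (n:ℕ) := pow_pos hK0 n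
    have hHy : H x2 / K ^ (n:ℕ) ≤ H y := by
      rw [div_le_iff₀ hKn0]
      nlinarith
    -- K^n ≤ T^(γ+ε) * (x2/x)^(γ+ε)
    have hKn : (K:ℝ) ^ (n:ℕ) ≤ T ^ (γ + ε) * (x2 / x) ^ (γ + ε) := by
      have h1 : (K:ℝ) ^ (n:ℕ) = T ^ ((γ + ε) * (n:ℝ)) := by
        rw [← Real.rpow_natCast K n, hKdef, ← Real.rpow_mul hT0.le]
      rw [h1]
      have h2 : (γ + ε) * (n:ℝ) ≤ (γ + ε) * (Real.logb T (x2 / x) + 1) := by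
        have hγε : 0 < γ + ε := by linarith
        nlinarith
      calc T ^ ((γ + ε) * (n:ℝ)) ≤ T ^ ((γ + ε) * (Real.logb T (x2 / x) + 1)) :=
            Real.rpow_le_rpow_of_exponent_le hT1.le h2
        _ = T ^ (γ + ε) * (x2 / x) ^ (γ + ε) := by
            rw [mul_add, mul_one, Real.rpow_add hT0, mul_comm ((γ+ε)) (Real.logb T (x2/x)),
              Real.rpow_mul hT0.le, hTlogb]
            ring
    -- combine
    have hmain : H x2 / (T ^ (γ + ε) * (x2 / x) ^ (γ + ε)) ≤ H x := by
      calc H x2 / (T ^ (γ + ε) * (x2 / x) ^ (γ + ε)) ≤ H x2 / K ^ (n:ℕ) := by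
            apply div_le_div_of_nonneg_left hx2H.le hKn0 hKn
        _ ≤ H y := hHy
        _ ≤ H x := hmono hyx
    calc c * x ^ (γ + ε) = H x2 / (T ^ (γ + ε) * (x2 / x) ^ (γ + ε)) := by
          rw [hcdef, Real.div_rpow hx2.le h0.le, Real.mul_rpow hT0.le hx2.le,
            Real.rpow_neg hT0.le, Real.rpow_neg hx2.le]
          have hxpow : (0:ℝ) < x ^ (γ+ε) := Real.rpow_pos_of_pos h0 _
          have hx2pow : (0:ℝ) < x2 ^ (γ+ε) := Real.rpow_pos_of_pos hx2 _
          have hTpow : (0:ℝ) < T ^ (γ+ε) := Real.rpow_pos_of_pos hT0 _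
          field_simp
      _ ≤ H x := hmain
  -- main proof
  refine ⟨max (T ^ (γ+ε)) ((c * (x1/T) ^ (γ+ε))⁻¹),
    lt_max_iff.2 (Or.inl (by positivity)), x2, hx2, ?_⟩
  intro x h0 hx u hu
  have hu0 : (0:ℝ) < u := lt_of_lt_of_le one_pos hu
  have hupow : (0:ℝ) < u ^ (γ+ε) := Real.rpow_pos_of_pos hu0 _
  have hHx := hpos x h0
  rcases le_or_gt (x*u) (x1/T) with hcase | hcase
  · -- case 1: small x*u
    set n : ℕ := ⌈Real.logb T u⌉₊ with hndef
    have hlogb0 : 0 ≤ Real.logb T u := Real.logb_nonneg hT1 hu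
    have hTlogb : T ^ Real.logb T u = u := Real.rpow_logb hT0 hT1.ne' hu0
    have hun : u ≤ T ^ (n:ℕ) := by
      rw [← Real.rpow_natCast T n, ← hTlogb]
      exact Real.rpow_le_rpow_of_exponent_le hT1.le (Nat.le_ceil _)
    have hnlt : (n:ℝ) < Real.logb T u + 1 := Nat.ceil_lt_add_one hlogb0
    have hTn : T ^ (n:ℕ) ≤ T * u := by
      calc (T:ℝ) ^ (n:ℕ) = T ^ ((n:ℝ)) := (Real.rpow_natCast T n).symm
        _ ≤ T ^ (Real.logb T u + 1) := Real.rpow_le_rpow_of_exponent_le hT1.le hnlt.le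
        _ = T * u := by rw [Real.rpow_add hT0, hTlogb, Real.rpow_one]; ring
    have hxTn : x * T ^ (n:ℕ) ≤ x1 := by
      calc x * T ^ (n:ℕ) ≤ x * (T*u) := mul_le_mul_of_nonneg_left hTn h0.le
        _ = T * (x*u) := by ring
        _ ≤ T * (x1/T) := mul_le_mul_of_nonneg_left hcase hT0.le
        _ = x1 := by field_simp
    have h1 : H (x*u) ≤ H (x * T ^ (n:ℕ)) := hmono (mul_le_mul_of_nonneg_left hun h0.le)
    have h2 := claimA n x h0 hxTn
    have hKn : K ^ (n:ℕ) ≤ T ^ (γ+ε) * u ^ (γ+ε) := by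
      calc K ^ (n:ℕ) = T ^ ((γ+ε)*(n:ℝ)) := by
            rw [← Real.rpow_natCast K n, hKdef, ← Real.rpow_mul hT0.le]
        _ ≤ T ^ ((γ+ε)*(Real.logb T u + 1)) :=
            Real.rpow_le_rpow_of_exponent_le hT1.le
              (mul_le_mul_of_nonneg_left hnlt.le (by linarith))
        _ = T ^ (γ+ε) * u ^ (γ+ε) := by
            rw [mul_add, mul_one, Real.rpow_add hT0, mul_comm (γ+ε) (Real.logb T u),
              Real.rpow_mul hT0.le, hTlogb]
            ring
    have hfin := le_max_left (T ^ (γ+ε)) ((c * (x1/T) ^ (γ+ε))⁻¹)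
    calc H (x*u) ≤ K ^ (n:ℕ) * H x := le_trans h1 h2
      _ ≤ (T ^ (γ+ε) * u ^ (γ+ε)) * H x := mul_le_mul_of_nonneg_right hKn hHx.le
      _ ≤ max (T ^ (γ+ε)) ((c * (x1/T) ^ (γ+ε))⁻¹) * u ^ (γ+ε) * H x :=
          mul_le_mul_of_nonneg_right (mul_le_mul_of_nonneg_right hfin hupow.le) hHx.le
  · -- case 2: large x*u
    have hHxu : H (x*u) ≤ 1 := hle1 _
    have hclow := hlow x h0 hx
    have hx1T : (0:ℝ) < x1/T := by positivity
    have hdiv : (x1/T) / x ≤ u := le_of_lt ((div_lt_iff₀ h0).2 (by rw [mul_comm]; exact hcase))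
    have hupow2 : (x1/T) ^ (γ+ε) * (x ^ (γ+ε))⁻¹ ≤ u ^ (γ+ε) := by
      calc (x1/T) ^ (γ+ε) * (x ^ (γ+ε))⁻¹ = ((x1/T)/x) ^ (γ+ε) := by
            rw [Real.div_rpow hx1T.le h0.le]; ring
        _ ≤ u ^ (γ+ε) := Real.rpow_le_rpow (by positivity) hdiv (by linarith)
    have hC2 : (0:ℝ) < (c * (x1/T) ^ (γ+ε))⁻¹ := by positivity
    have hxg : (0:ℝ) < x ^ (γ+ε) := Real.rpow_pos_of_pos h0 _
    have hAg : (0:ℝ) < (x1/T) ^ (γ+ε) := Real.rpow_pos_of_pos hx1T _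
    have key : 1 ≤ (c * (x1/T) ^ (γ+ε))⁻¹ * u ^ (γ+ε) * H x := by
      have hone : (1:ℝ) = (c * (x1/T) ^ (γ+ε))⁻¹ * ((x1/T) ^ (γ+ε) * (x ^ (γ+ε))⁻¹)
          * (c * x ^ (γ+ε)) := by
        field_simp
      rw [hone]
      exact mul_le_mul (mul_le_mul_of_nonneg_left hupow2 hC2.le) hclow
        (mul_pos hc0 hxg).le (mul_pos hC2 hupow).le
    have hfin := le_max_right (T ^ (γ+ε)) ((c * (x1/T) ^ (γ+ε))⁻¹)
    calc H (x*u) ≤ 1 := hHxu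
      _ ≤ (c * (x1/T) ^ (γ+ε))⁻¹ * u ^ (γ+ε) * H x := key
      _ ≤ max (T ^ (γ+ε)) ((c * (x1/T) ^ (γ+ε))⁻¹) * u ^ (γ+ε) * H x :=
          mul_le_mul_of_nonneg_right (mul_le_mul_of_nonneg_right hfin hupow.le) hHx.le






theorem weyl_integral_asymptotics
    (α β' γ δ : ℝ) (hα : 0 < α) (hβ' : 0 < β') (hγ : 0 < γ)
    (hγαβ : γ < α + β') (hδ : δ ∈ Set.Ioc (0 : ℝ) 1)
    -- `H` is a distribution function on `(0,∞)` with `H(0) = 0`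
    (H : ℝ → ℝ) (hmono : Monotone H) (hH0 : ∀ x ≤ (0 : ℝ), H x = 0)
    (hH1 : Filter.Tendsto H Filter.atTop (nhds 1))
    (hHrv : RegVarAt0 H γ) :
    Filter.Tendsto
      (fun x => (∫ y in Set.Ioi x, (y - x) ^ (δ - 1) * y ^ (-(α + β' + 1)) * H y) /
        (x ^ (δ - (α + β' + 1)) * H x *
          (Real.Gamma δ * Real.Gamma ((α + β' + 1) - δ - γ) /
            Real.Gamma ((α + β' + 1) - γ))))
      (nhdsWithin 0 (Set.Ioi 0)) (nhds 1) := by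
  obtain ⟨hδ0, hδ1⟩ := hδ
  set l : ℝ := α + β' + 1 with hldef
  have hlδγ : 0 < l - δ - γ := by simp only [hldef]; linarith
  have hlγ : 0 < l - γ := by linarith
  have hpos := H_pos hγ hmono hH0 hHrv
  have hnn : ∀ x : ℝ, 0 ≤ H x := by
    intro x
    rcases le_or_gt x 0 with h | h
    · rw [hH0 x h]
    · exact (hpos x h).le
  have hle1 : ∀ x : ℝ, H x ≤ 1 := by
    intro x
    refine ge_of_tendsto hH1 ?_
    filter_upwards [Filter.eventually_ge_atTop x] with y hy
    exact hmono hy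
  set ε : ℝ := (l - δ - γ)/2 with hεdef
  have hε : 0 < ε := by positivity
  obtain ⟨C, hC, x0, hx0, hpot⟩ := potter hγ hε hmono hpos hle1 hHrv
  have hbeta := beta_Ioi (a := l - γ - δ) (b := δ) (by linarith) hδ0
  rw [show l - γ - δ + δ = l - γ by ring] at hbeta
  have hlim_eq : ∫ u in Ioi (1:ℝ), (u-1) ^ (δ-1) * u ^ (-l) * u ^ γ
      = Gamma (l-γ-δ) * Gamma δ / Gamma (l-γ) := by
    rw [← hbeta]
    apply setIntegral_congr_fun measurableSet_Ioi
    intro u hu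
    have hu0 : (0:ℝ) < u := lt_trans one_pos hu
    simp only []
    rw [mul_assoc, ← Real.rpow_add hu0]
    congr 1
    ring
  set K0 : ℝ := Gamma δ * Gamma (l - δ - γ) / Gamma (l - γ) with hK0def
  have hK0 : 0 < K0 := by
    apply div_pos (mul_pos (Gamma_pos_of_pos hδ0) (Gamma_pos_of_pos hlδγ))
      (Gamma_pos_of_pos hlγ)
  have hK0eq : ∫ u in Ioi (1:ℝ), (u-1) ^ (δ-1) * u ^ (-l) * u ^ γ = K0 := by
    rw [hlim_eq, hK0def, show l - γ - δ = l - δ - γ by ring]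
    ring
  have hDCT : Tendsto (fun x => ∫ u in Ioi (1:ℝ), (u-1) ^ (δ-1) * u ^ (-l) * (H (x*u) / H x))
      (nhdsWithin 0 (Set.Ioi 0)) (nhds (∫ u in Ioi (1:ℝ), (u-1) ^ (δ-1) * u ^ (-l) * u ^ γ)) := by
    apply tendsto_integral_filter_of_dominated_convergence
      (bound := fun u => C * ((u-1) ^ (δ-1) * u ^ (-(l - γ - ε))))
    · filter_upwards [self_mem_nhdsWithin] with x (hx : (0:ℝ) < x)
      apply AEStronglyMeasurable.mul
      · apply ContinuousOn.aestronglyMeasurable ?_ measurableSet_Ioi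
        intro u hu
        have hu1 : (1:ℝ) < u := hu
        apply ContinuousWithinAt.mul
        · exact ContinuousWithinAt.rpow_const
            (continuousWithinAt_id.sub continuousWithinAt_const)
            (Or.inl (sub_ne_zero.mpr (ne_of_gt hu1)))
        · exact ContinuousWithinAt.rpow_const continuousWithinAt_id
            (Or.inl (by intro h; rw [h] at hu1; norm_num at hu1))
      · apply AEMeasurable.aestronglyMeasurable
        exact ((hmono.measurable.comp (measurable_const_mul x)).div_const (H x)).aemeasurable
    · have h1 : ∀ᶠ x in nhdsWithin (0:ℝ) (Set.Ioi 0), x < x0 :=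
        nhdsWithin_le_nhds (Iio_mem_nhds hx0)
      filter_upwards [h1, self_mem_nhdsWithin] with x hxlt (hx : (0:ℝ) < x)
      filter_upwards [ae_restrict_mem measurableSet_Ioi] with u hu
      have hu1 : (1:ℝ) < u := hu
      have hu0 : (0:ℝ) < u := lt_trans one_pos hu1
      have hA : (0:ℝ) ≤ (u-1) ^ (δ-1) * u ^ (-l) :=
        mul_nonneg (rpow_nonneg (by linarith) _) (rpow_nonneg hu0.le _)
      have hratio : H (x*u) / H x ≤ C * u ^ (γ+ε) := by
        rw [div_le_iff₀ (hpos x hx)]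
        exact hpot x hx hxlt.le u hu1.le
      have hdiv0 : (0:ℝ) ≤ H (x*u) / H x := div_nonneg (hnn _) (hnn _)
      rw [norm_of_nonneg (mul_nonneg hA hdiv0)]
      calc (u-1) ^ (δ-1) * u ^ (-l) * (H (x*u) / H x)
          ≤ (u-1) ^ (δ-1) * u ^ (-l) * (C * u ^ (γ+ε)) :=
            mul_le_mul_of_nonneg_left hratio hA
        _ = C * ((u-1) ^ (δ-1) * (u ^ (-l) * u ^ (γ+ε))) := by ring
        _ = C * ((u-1) ^ (δ-1) * u ^ (-(l - γ - ε))) := by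
            rw [← Real.rpow_add hu0]
            congr 3
            ring
    · apply Integrable.const_mul
      exact integrable_aux hδ0 hδ1 (by rw [hεdef]; linarith)
    · filter_upwards [ae_restrict_mem measurableSet_Ioi] with u hu
      have hu1 : (1:ℝ) < u := hu
      have hu0 : (0:ℝ) < u := lt_trans one_pos hu1
      exact Tendsto.const_mul _ ((hHrv u hu0).congr (fun x => by rw [mul_comm]))
  rw [hK0eq] at hDCT
  have hchg : ∀ x : ℝ, 0 < x →
      (∫ y in Set.Ioi x, (y - x) ^ (δ - 1) * y ^ (-l) * H y)
        = x ^ (δ - l) * H x * (∫ u in Ioi (1:ℝ), (u-1) ^ (δ-1) * u ^ (-l) * (H (x*u) / H x)) := by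
    intro x hx
    have h1 := integral_comp_mul_left_Ioi
      (fun y => (y - x) ^ (δ - 1) * y ^ (-l) * H y) 1 hx
    rw [mul_one, smul_eq_mul] at h1
    have h2 : (∫ y in Set.Ioi x, (y - x) ^ (δ - 1) * y ^ (-l) * H y)
        = x * ∫ u in Ioi (1:ℝ), (x*u - x) ^ (δ - 1) * (x*u) ^ (-l) * H (x*u) := by
      rw [h1]
      field_simp
    rw [h2]
    have h3 : ∫ u in Ioi (1:ℝ), (x*u - x) ^ (δ - 1) * (x*u) ^ (-l) * H (x*u)
        = (x ^ (δ-1) * x ^ (-l)) * ∫ u in Ioi (1:ℝ), (u-1) ^ (δ-1) * u ^ (-l) * H (x*u) := by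
      rw [← integral_const_mul]
      apply setIntegral_congr_fun measurableSet_Ioi
      intro u hu
      have hu1 : (1:ℝ) < u := hu
      have hu0 : (0:ℝ) < u := lt_trans one_pos hu1
      simp only []
      have e1 : x*u - x = x * (u - 1) := by ring
      rw [e1, Real.mul_rpow hx.le (by linarith), Real.mul_rpow hx.le hu0.le]
      ring
    have h4 : ∫ u in Ioi (1:ℝ), (u-1) ^ (δ-1) * u ^ (-l) * (H (x*u) / H x)
        = (∫ u in Ioi (1:ℝ), (u-1) ^ (δ-1) * u ^ (-l) * H (x*u)) * (H x)⁻¹ := by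
      rw [← integral_mul_const]
      apply setIntegral_congr_fun measurableSet_Ioi
      intro u _
      simp only []
      rw [div_eq_mul_inv]
      ring
    rw [h3, h4]
    have hHx := hpos x hx
    have hxpow : x * (x ^ (δ-1) * x ^ (-l)) = x ^ (δ - l) := by
      nth_rewrite 1 [← Real.rpow_one x]
      rw [← Real.rpow_add hx, ← Real.rpow_add hx]
      congr 1
      ring
    field_simp
    rw [← hxpow]
    ring
  have hfinal : Tendsto (fun x =>
      (∫ u in Ioi (1:ℝ), (u-1) ^ (δ-1) * u ^ (-l) * (H (x*u) / H x)) / K0)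
      (nhdsWithin 0 (Set.Ioi 0)) (nhds 1) := by
    have := hDCT.div_const K0
    rwa [div_self (ne_of_gt hK0)] at this
  apply hfinal.congr'
  filter_upwards [self_mem_nhdsWithin] with x (hx : (0:ℝ) < x)
  rw [hchg x hx]
  have hne : x ^ (δ - l) * H x ≠ 0 :=
    ne_of_gt (mul_pos (Real.rpow_pos_of_pos hx _) (hpos x hx))
  exact (mul_div_mul_left _ _ hne).symm
end
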